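/- arXiv:1307.6580 — 6 statements merged into one kernel-verified Lean document; each statement's English description precedes it below -/
import Mathlib

section
/- The monoid M presented by ⟨x, y, e | e³ = e, xey = y, xe²y = x, xy = 1⟩ is congruence-free: every congruence on M is either the equality relation or the universal relation M × M. -/
/-- The alphabet `A = {x, y, e}`. -/
inductive Alpha : Type
  | x | y | e
  deriving DecidableEq

/-- The defining relations `e³ = e`, `xey = y`, `xe²y = x`, `xy = 1`. -/
def rel : FreeMonoid Alpha → FreeMonoid Alpha → Prop := fun a b =>
  (a = .of .e * .of .e * .of .e ∧ b = .of .e) ∨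
  (a = .of .x * .of .e * .of .y ∧ b = .of .y) ∨
  (a = .of .x * .of .e * .of .e * .of .y ∧ b = .of .x) ∨
  (a = .of .x * .of .y ∧ b = 1)

/-- The monoid `M = ⟨x, y, e | e³ = e, xey = y, xe²y = x, xy = 1⟩`. -/
abbrev M := PresentedMonoid rel

/-- The image of `x` in `M`. -/
def X : M := PresentedMonoid.of rel .x
/-- The image of `y` in `M`. -/
def Y : M := PresentedMonoid.of rel .y
/-- The image of `e` in `M`. -/
def E : M := PresentedMonoid.of rel .e

namespace CF
abbrev mkw : FreeMonoid Alpha →* M := PresentedMonoid.mk rel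
lemma sound {a b : FreeMonoid Alpha} (h : rel a b) : mkw a = mkw b :=
  Quotient.sound (ConGen.Rel.of _ _ h)
lemma rE3 : E * E * E = E := by
  simpa [X, Y, E, PresentedMonoid.of] using sound (a := .of .e * .of .e * .of .e) (b := .of .e) (Or.inl ⟨rfl, rfl⟩)
lemma rXEY : X * E * Y = Y := by
  simpa [X, Y, E, PresentedMonoid.of] using sound (a := .of .x * .of .e * .of .y) (b := .of .y)
    (Or.inr (Or.inl ⟨rfl, rfl⟩))
lemma rXE2Y : X * E * E * Y = X := by
  simpa [X, Y, E, PresentedMonoid.of] using sound (a := .of .x * .of .e * .of .e * .of .y) (b := .of .x)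
    (Or.inr (Or.inr (Or.inl ⟨rfl, rfl⟩)))
lemma rXY : X * Y = 1 := by
  simpa [X, Y, E, PresentedMonoid.of] using sound (a := .of .x * .of .y) (b := 1)
    (Or.inr (Or.inr (Or.inr ⟨rfl, rfl⟩)))

lemma rXY' (b : M) : X * (Y * b) = b := by rw [← mul_assoc, rXY, one_mul]
lemma rXEY' (b : M) : X * (E * (Y * b)) = Y * b := by
  rw [← mul_assoc, ← mul_assoc, rXEY]
lemma rXE2Y' (b : M) : X * (E * (E * (Y * b))) = X * b := by
  rw [← mul_assoc, ← mul_assoc, ← mul_assoc, rXE2Y]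
lemma rE3' (b : M) : E * (E * (E * b)) = E * b := by
  rw [← mul_assoc, ← mul_assoc, rE3]

lemma XpYp : ∀ m : ℕ, X ^ m * Y ^ m = 1
  | 0 => by simp
  | (m+1) => by
    have : X ^ (m+1) * Y ^ (m+1) = X ^ m * (X * Y) * Y ^ m := by
      rw [pow_succ, pow_succ']; group
    rw [this, rXY, mul_one, XpYp m]

lemma XpYp_le {p q : ℕ} (h : p ≤ q) : X ^ p * Y ^ q = Y ^ (q - p) := by
  have : Y ^ q = Y ^ p * Y ^ (q - p) := by rw [← pow_add]; congr 1; omega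
  rw [this, ← mul_assoc, XpYp, one_mul]

lemma XpEYp {m : ℕ} (h : 1 ≤ m) : X ^ m * E * Y ^ m = Y := by
  obtain ⟨n, rfl⟩ : ∃ n, m = n + 1 := ⟨m - 1, by omega⟩
  have : X ^ (n+1) * E * Y ^ (n+1) = X ^ n * (X * E * Y) * Y ^ n := by
    rw [pow_succ, pow_succ']; group
  rw [this, rXEY]
  have : X ^ n * Y * Y ^ n = X ^ n * Y ^ n * Y := by
    rw [mul_assoc, mul_assoc, ← pow_succ', pow_succ]
  rw [this, XpYp, one_mul]

lemma XpE2Yp {m : ℕ} (h : 1 ≤ m) : X ^ m * (E * E) * Y ^ m = X := by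
  obtain ⟨n, rfl⟩ : ∃ n, m = n + 1 := ⟨m - 1, by omega⟩
  have : X ^ (n+1) * (E * E) * Y ^ (n+1) = X ^ n * (X * E * E * Y) * Y ^ n := by
    rw [pow_succ, pow_succ']; group
  rw [this, rXE2Y]
  have : X ^ n * X * Y ^ n = X * (X ^ n * Y ^ n) := by
    rw [← pow_succ, pow_succ', mul_assoc]
  rw [this, XpYp, mul_one]

variable {c : Con M}

lemma con_top_of_one (h : ∀ m : M, c m 1) : c = ⊤ := by
  ext a b
  constructor
  · intro _; trivial
  · intro _; exact c.trans (h a) (c.symm (h b))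

lemma pp_y {m : ℕ} (hm : 1 ≤ m) (h : c 1 (Y ^ m)) : c = ⊤ := by
  have hX : c (X ^ m) 1 := by
    have := c.mul (c.refl (X ^ m)) h
    rw [mul_one, XpYp] at this; exact this
  have hYE : c Y E := by
    have := c.mul (c.mul hX (c.refl E)) (c.symm h)
    rw [one_mul, mul_one, XpEYp hm] at this; exact this
  have hXE2 : c X (E * E) := by
    have := c.mul (c.mul hX (c.refl (E * E))) (c.symm h)
    rw [one_mul, mul_one, XpE2Yp hm] at this; exact this
  have hE1 : c E 1 := by
    have := c.mul (c.symm hXE2) (c.symm hYE)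
    rw [rXY] at this
    have h2 : E * E * E = E := rE3
    rw [h2] at this; exact this
  have hY1 : c Y 1 := c.trans hYE hE1
  have hX1 : c X 1 := by
    have := c.mul (c.refl X) hY1
    rw [rXY, mul_one] at this; exact c.symm this
  apply con_top_of_one
  intro m
  have hmem : m ∈ Submonoid.closure (Set.range (PresentedMonoid.of rel)) := by
    rw [PresentedMonoid.closure_range_of]; trivial
  induction hmem using Submonoid.closure_induction with
  | mem z hz =>
    obtain ⟨a, rfl⟩ := hz
    cases a
    · exact hX1
    · exact hY1
    · exact hE1
  | one => exact c.refl 1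
  | mul a b _ _ ha hb => simpa using c.mul ha hb

lemma pp_x {m : ℕ} (hm : 1 ≤ m) (h : c 1 (X ^ m)) : c = ⊤ := by
  have := c.mul h (c.refl (Y ^ m))
  rw [one_mul, XpYp] at this
  exact pp_y hm (c.symm this)

lemma pp_yy {p q : ℕ} (hpq : p ≠ q) (h : c (Y ^ p) (Y ^ q)) : c = ⊤ := by
  rcases Nat.lt_or_ge p q with hlt | hge
  · have := c.mul (c.refl (X ^ p)) h
    rw [XpYp, XpYp_le (le_of_lt hlt)] at this
    exact pp_y (by omega) this
  · have hlt : q < p := by omega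
    have := c.mul (c.refl (X ^ q)) (c.symm h)
    rw [XpYp, XpYp_le (le_of_lt hlt)] at this
    exact pp_y (by omega) this


/-! ### digits -/

inductive D : Type
  | d0 | d1 | d2
  deriving DecidableEq, Repr

open D

def bump : D → D
  | d0 => d1 | d1 => d2 | d2 => d1

def Ep : D → M
  | d0 => 1 | d1 => E | d2 => E * E

lemma Ep_bump (k : D) : Ep (bump k) = Ep k * E := by
  cases k <;> simp [Ep, bump, rE3]

lemma Ep_bump' (k : D) : Ep (bump k) = E * Ep k := by
  cases k <;> simp [Ep, bump]
  rw [← mul_assoc, rE3]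

def Lm : List D → M
  | [] => 1
  | [i] => Ep i
  | i :: t => Ep i * (Y * Lm t)

def Rm : List D → M
  | [] => 1
  | k :: r => Rm r * (X * Ep k)

abbrev Q : Type := List D × List D

def toM (q : Q) : M := Lm q.1 * Rm q.2

lemma Lm_cons {t : List D} (i : D) (h : t ≠ []) : Lm (i :: t) = Ep i * (Y * Lm t) := by
  cases t with
  | nil => exact absurd rfl h
  | cons a s => rfl

lemma Lm_append0 : ∀ (σ : List D), σ ≠ [] → Lm (σ ++ [d0]) = Lm σ * Y
  | [], h => absurd rfl h
  | [i], _ => by simp [Lm, Ep]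
  | i :: a :: s, _ => by
    have ih := Lm_append0 (a :: s) (by simp)
    show Lm (i :: ((a :: s) ++ [d0])) = Lm (i :: a :: s) * Y
    rw [Lm_cons i (by simp), Lm_cons i (by simp), ih]
    group

def bl : List D → List D
  | [] => []
  | [d] => [bump d]
  | d :: t => d :: bl t

lemma bl_ne_nil {σ : List D} (h : σ ≠ []) : bl σ ≠ [] := by
  cases σ with
  | nil => exact absurd rfl h
  | cons a s => cases s <;> simp [bl]

lemma Lm_bl : ∀ (σ : List D), σ ≠ [] → Lm (bl σ) = Lm σ * E
  | [], h => absurd rfl h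
  | [i], _ => by simp [bl, Lm, Ep_bump]
  | i :: a :: s, _ => by
    have ih := Lm_bl (a :: s) (by simp)
    have hbl : bl (a :: s) ≠ [] := bl_ne_nil (by simp)
    show Lm (i :: bl (a :: s)) = Lm (i :: a :: s) * E
    rw [Lm_cons i hbl, Lm_cons i (by simp), ih]
    group

def bh : List D → List D
  | [] => []
  | d :: t => bump d :: t

lemma Lm_bh : ∀ (σ : List D), σ ≠ [] → Lm (bh σ) = E * Lm σ
  | [], h => absurd rfl h
  | [i], _ => by simp [bh, Lm, Ep_bump']
  | i :: a :: s, _ => by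
    show Lm (bump i :: a :: s) = E * Lm (i :: a :: s)
    rw [Lm_cons (t := a :: s) (bump i) (by simp), Lm_cons (t := a :: s) i (by simp), Ep_bump']
    group

lemma Rm_append (i : D) : ∀ (ρ : List D), Rm (ρ ++ [i]) = X * Ep i * Rm ρ
  | [] => by simp [Rm]
  | k :: r => by
    show Rm (r ++ [i]) * (X * Ep k) = X * Ep i * (Rm r * (X * Ep k))
    rw [Rm_append i r]; group

/-! ### operations -/

def rX (q : Q) : Q := (q.1, d0 :: q.2)

def rE (q : Q) : Q :=
  match q.2 with
  | k :: r => (q.1, bump k :: r)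
  | [] => (bl q.1, [])

def rY : List D → List D → Q
  | σ, d0 :: r => (σ, r)
  | σ, d1 :: r => rY σ r
  | σ, d2 :: r => (σ, d0 :: r)
  | σ, [] => (σ ++ [d0], [])

def rYq (q : Q) : Q := rY q.1 q.2

def lE (q : Q) : Q := (bh q.1, q.2)

def lX : List D → List D → Q
  | [d], ρ => ([d0], ρ ++ [d])
  | d0 :: s, ρ => (s, ρ)
  | d1 :: s, ρ => (d0 :: s, ρ)
  | d2 :: s, ρ => lX s ρ
  | [], ρ => ([], ρ)

def lXq (q : Q) : Q := lX q.1 q.2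

@[simp] lemma lX_single (d : D) (ρ : List D) : lX [d] ρ = ([d0], ρ ++ [d]) := by
  cases d <;> rfl

lemma lX_cons0 (a : D) (s ρ : List D) : lX (d0 :: a :: s) ρ = (a :: s, ρ) := rfl
lemma lX_cons1 (a : D) (s ρ : List D) : lX (d1 :: a :: s) ρ = (d0 :: a :: s, ρ) := rfl
lemma lX_cons2 (a : D) (s ρ : List D) : lX (d2 :: a :: s) ρ = lX (a :: s) ρ := rfl

/-! ### soundness -/

lemma S_rX (q : Q) : toM (rX q) = toM q * X := by
  show Lm q.1 * (Rm q.2 * (X * Ep d0)) = Lm q.1 * Rm q.2 * X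
  simp [Ep, mul_assoc]

lemma S_rE (q : Q) (h : q.1 ≠ []) : toM (rE q) = toM q * E := by
  obtain ⟨σ, ρ⟩ := q
  cases ρ with
  | nil => show Lm (bl σ) * Rm [] = Lm σ * Rm [] * E; simp [Rm, Lm_bl σ h]
  | cons k r =>
    show Lm σ * (Rm r * (X * Ep (bump k))) = Lm σ * (Rm r * (X * Ep k)) * E
    rw [Ep_bump]; group

lemma S_rY : ∀ (σ ρ : List D), σ ≠ [] → toM (rY σ ρ) = toM (σ, ρ) * Y
  | σ, [], h => by
    show Lm (σ ++ [d0]) * Rm [] = Lm σ * Rm [] * Y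
    simp [Rm, Lm_append0 σ h]
  | σ, d0 :: r, h => by
    show Lm σ * Rm r = Lm σ * (Rm r * (X * Ep d0)) * Y
    simp only [Ep, mul_one, mul_assoc]
    rw [rXY, mul_one]
  | σ, d1 :: r, h => by
    have ih := S_rY σ r h
    show toM (rY σ r) = Lm σ * (Rm r * (X * Ep d1)) * Y
    rw [ih]
    show Lm σ * Rm r * Y = _
    simp only [Ep, mul_assoc]
    rw [show E * Y = E * (Y * 1) by simp, rXEY' (1 : M)]
    simp
  | σ, d2 :: r, h => by
    show Lm σ * (Rm r * (X * Ep d0)) = Lm σ * (Rm r * (X * Ep d2)) * Y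
    simp only [Ep, mul_one, mul_assoc]
    rw [show E * (E * Y) = E * (E * (Y * 1)) by simp, rXE2Y' (1 : M)]
    simp

lemma S_lE (q : Q) (h : q.1 ≠ []) : toM (lE q) = E * toM q := by
  show Lm (bh q.1) * Rm q.2 = E * (Lm q.1 * Rm q.2)
  rw [Lm_bh q.1 h]; group

lemma S_lX : ∀ (σ ρ : List D), σ ≠ [] → toM (lX σ ρ) = X * toM (σ, ρ)
  | [], ρ, h => absurd rfl h
  | [d], ρ, _ => by
    rw [lX_single]
    show Lm [d0] * Rm (ρ ++ [d]) = X * (Lm [d] * Rm ρ)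
    rw [Rm_append]
    show Ep d0 * (X * Ep d * Rm ρ) = X * (Ep d * Rm ρ)
    simp [Ep, mul_assoc]
  | d0 :: a :: s, ρ, _ => by
    rw [lX_cons0]
    show Lm (a :: s) * Rm ρ = X * (Lm (d0 :: a :: s) * Rm ρ)
    rw [Lm_cons (t := a :: s) d0 (by simp)]
    simp only [Ep, one_mul, mul_assoc]
    rw [rXY']
  | d1 :: a :: s, ρ, _ => by
    rw [lX_cons1]
    show Lm (d0 :: a :: s) * Rm ρ = X * (Lm (d1 :: a :: s) * Rm ρ)
    rw [Lm_cons (t := a :: s) d0 (by simp), Lm_cons (t := a :: s) d1 (by simp)]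
    simp only [Ep, one_mul, mul_assoc]
    rw [rXEY']
  | d2 :: a :: s, ρ, _ => by
    rw [lX_cons2]
    have ih := S_lX (a :: s) ρ (by simp)
    rw [ih]
    show X * (Lm (a :: s) * Rm ρ) = X * (Lm (d2 :: a :: s) * Rm ρ)
    rw [Lm_cons (t := a :: s) d2 (by simp)]
    simp only [Ep, mul_assoc]
    rw [rXE2Y']

/-! ### canonicality -/

lemma rY_fst_ne : ∀ (σ ρ : List D), σ ≠ [] → (rY σ ρ).1 ≠ []
  | σ, [], h => by simp [rY]
  | σ, d0 :: r, h => h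
  | σ, d1 :: r, h => rY_fst_ne σ r h
  | σ, d2 :: r, h => h

lemma lX_fst_ne : ∀ (σ ρ : List D), σ ≠ [] → (lX σ ρ).1 ≠ []
  | [], ρ, h => absurd rfl h
  | [d], ρ, _ => by simp
  | d0 :: a :: s, ρ, _ => by rw [lX_cons0]; simp
  | d1 :: a :: s, ρ, _ => by rw [lX_cons1]; simp
  | d2 :: a :: s, ρ, _ => by rw [lX_cons2]; exact lX_fst_ne (a :: s) ρ (by simp)


/-! ### numeric functions and iterates -/

def cD : D → ℕ
  | d0 => 1 | d1 => 0 | d2 => 2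

def cc : List D → ℕ
  | [] => 0
  | k :: r => cD k + cc r

def cstD : D → ℕ
  | d0 => 1 | d1 => 2 | d2 => 0

def cst : List D → ℕ
  | [] => 0
  | k :: r => cstD k + cst r

def wD : D → ℕ
  | d0 => 1 | d1 => 2 | d2 => 3

def Wt : List D → ℕ
  | [] => 0
  | k :: r => wD k + Wt r

def mD : D → ℕ
  | d0 => 1 | d1 => 3 | d2 => 2

def mm : List D → ℕ
  | [] => 0
  | k :: r => mD k + mm r

def XX : List D → ℕ
  | [] => 0
  | [_] => 1
  | d0 :: t => 1 + XX t
  | d1 :: t => 2 + XX t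
  | d2 :: t => XX t

lemma XX_cons0 {t : List D} (h : t ≠ []) : XX (d0 :: t) = 1 + XX t := by
  cases t with
  | nil => exact absurd rfl h
  | cons a s => rfl

lemma XX_cons1 {t : List D} (h : t ≠ []) : XX (d1 :: t) = 2 + XX t := by
  cases t with
  | nil => exact absurd rfl h
  | cons a s => rfl

lemma XX_cons2 {t : List D} (h : t ≠ []) : XX (d2 :: t) = XX t := by
  cases t with
  | nil => exact absurd rfl h
  | cons a s => rfl

lemma XX_pos : ∀ (π : List D), π ≠ [] → 1 ≤ XX π
  | [], h => absurd rfl h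
  | [d], _ => by cases d <;> exact le_refl 1
  | d0 :: a :: s, _ => by rw [XX_cons0 (by simp)]; omega
  | d1 :: a :: s, _ => by rw [XX_cons1 (by simp)]; omega
  | d2 :: a :: s, _ => by rw [XX_cons2 (by simp)]; exact XX_pos (a :: s) (by simp)

lemma XX_rep : ∀ m : ℕ, 1 ≤ m → XX (List.replicate m d0) = m
  | 0, h => by omega
  | 1, _ => rfl
  | (m+2), _ => by
    rw [List.replicate_succ, XX_cons0 (by simp), XX_rep (m+1) (by omega)]
    omega

lemma XX_append_rep : ∀ (σ : List D) (m : ℕ), 1 ≤ m →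
    XX (σ ++ List.replicate m d0) = cst σ + m
  | [], m, h => by simpa [cst] using XX_rep m h
  | k :: t, m, h => by
    have ht : t ++ List.replicate m d0 ≠ [] := by
      simp [List.replicate, h]
      intro _; omega
    have ih := XX_append_rep t m h
    cases k
    · rw [List.cons_append, XX_cons0 ht, ih]; simp [cst, cstD]; omega
    · rw [List.cons_append, XX_cons1 ht, ih]; simp [cst, cstD]; omega
    · rw [List.cons_append, XX_cons2 ht, ih]; simp [cst, cstD]

def gl : List D → D
  | [] => d0
  | [d] => d
  | _ :: t => gl t

lemma gl_cons {t : List D} (k : D) (h : t ≠ []) : gl (k :: t) = gl t := by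
  cases t with
  | nil => exact absurd rfl h
  | cons a s => rfl

lemma gl_rep : ∀ (m : ℕ), 1 ≤ m → gl (List.replicate m d0) = d0
  | 0, h => by omega
  | 1, _ => rfl
  | (m+2), _ => by
    rw [List.replicate_succ, gl_cons d0 (by simp), gl_rep (m+1) (by omega)]

lemma gl_append_rep : ∀ (σ : List D) (m : ℕ), 1 ≤ m →
    gl (σ ++ List.replicate m d0) = d0
  | [], m, h => by simpa using gl_rep m h
  | k :: t, m, h => by
    have ht : t ++ List.replicate m d0 ≠ [] := by
      cases t <;> simp [List.replicate_succ] <;> omega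
    rw [List.cons_append, gl_cons k ht, gl_append_rep t m h]

/-! ### iterates -/

def rYn : ℕ → Q → Q
  | 0, q => q
  | n+1, q => rYn n (rYq q)

def lXn : ℕ → Q → Q
  | 0, q => q
  | n+1, q => lXn n (lXq q)

def rEn : ℕ → Q → Q
  | 0, q => q
  | n+1, q => rEn n (rE q)

def lEn : ℕ → Q → Q
  | 0, q => q
  | n+1, q => lEn n (lE q)

lemma rE_fst_ne {q : Q} (h : q.1 ≠ []) : (rE q).1 ≠ [] := by
  obtain ⟨σ, ρ⟩ := q
  cases ρ with
  | nil => exact bl_ne_nil h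
  | cons k r => exact h

lemma rYq_fst_ne {q : Q} (h : q.1 ≠ []) : (rYq q).1 ≠ [] := rY_fst_ne q.1 q.2 h

lemma lE_fst_ne {q : Q} (h : q.1 ≠ []) : (lE q).1 ≠ [] := by
  obtain ⟨σ, ρ⟩ := q
  cases σ with
  | nil => exact absurd rfl h
  | cons a s => simp [lE, bh]

lemma lXq_fst_ne {q : Q} (h : q.1 ≠ []) : (lXq q).1 ≠ [] := lX_fst_ne q.1 q.2 h

lemma rYn_fst_ne : ∀ (n : ℕ) {q : Q}, q.1 ≠ [] → (rYn n q).1 ≠ []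
  | 0, _, h => h
  | n+1, q, h => rYn_fst_ne n (rYq_fst_ne h)

lemma lXn_fst_ne : ∀ (n : ℕ) {q : Q}, q.1 ≠ [] → (lXn n q).1 ≠ []
  | 0, _, h => h
  | n+1, q, h => lXn_fst_ne n (lXq_fst_ne h)

lemma rEn_fst_ne : ∀ (n : ℕ) {q : Q}, q.1 ≠ [] → (rEn n q).1 ≠ []
  | 0, _, h => h
  | n+1, q, h => rEn_fst_ne n (rE_fst_ne h)

lemma lEn_fst_ne : ∀ (n : ℕ) {q : Q}, q.1 ≠ [] → (lEn n q).1 ≠ []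
  | 0, _, h => h
  | n+1, q, h => lEn_fst_ne n (lE_fst_ne h)

lemma S_rYn : ∀ (n : ℕ) (q : Q), q.1 ≠ [] → toM (rYn n q) = toM q * Y ^ n
  | 0, q, _ => by simp [rYn]
  | n+1, q, h => by
    rw [show rYn (n+1) q = rYn n (rYq q) from rfl, S_rYn n (rYq q) (rYq_fst_ne h)]
    rw [show rYq q = rY q.1 q.2 from rfl, S_rY q.1 q.2 h]
    rw [mul_assoc, ← pow_succ']

lemma S_lXn : ∀ (n : ℕ) (q : Q), q.1 ≠ [] → toM (lXn n q) = X ^ n * toM q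
  | 0, q, _ => by simp [lXn]
  | n+1, q, h => by
    rw [show lXn (n+1) q = lXn n (lXq q) from rfl, S_lXn n (lXq q) (lXq_fst_ne h)]
    rw [show lXq q = lX q.1 q.2 from rfl, S_lX q.1 q.2 h]
    rw [← mul_assoc, ← pow_succ]

lemma S_rEn : ∀ (n : ℕ) (q : Q), q.1 ≠ [] → toM (rEn n q) = toM q * E ^ n
  | 0, q, _ => by simp [rEn]
  | n+1, q, h => by
    rw [show rEn (n+1) q = rEn n (rE q) from rfl, S_rEn n (rE q) (rE_fst_ne h)]
    rw [S_rE q h, mul_assoc, ← pow_succ']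

lemma S_lEn : ∀ (n : ℕ) (q : Q), q.1 ≠ [] → toM (lEn n q) = E ^ n * toM q
  | 0, q, _ => by simp [lEn]
  | n+1, q, h => by
    rw [show lEn (n+1) q = lEn n (lE q) from rfl, S_lEn n (lE q) (lE_fst_ne h)]
    rw [S_lE q h, ← mul_assoc, ← pow_succ]

/-! ### collapse lemmas -/

lemma rYn_pure : ∀ (n : ℕ) (σ : List D),
    rYn n (σ, []) = (σ ++ List.replicate n d0, [])
  | 0, σ => by simp [rYn]
  | n+1, σ => by
    rw [show rYn (n+1) (σ, []) = rYn n (rYq (σ, [])) from rfl]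
    rw [show rYq (σ, []) = (σ ++ [d0], []) from rfl, rYn_pure n (σ ++ [d0])]
    simp [List.replicate_succ]

lemma rYn_collapse : ∀ (N : ℕ), ∀ (ρ : List D), mm ρ ≤ N → ∀ (σ : List D) (n : ℕ),
    cc ρ + 1 ≤ n → rYn n (σ, ρ) = (σ ++ List.replicate (n - cc ρ) d0, []) := by
  intro N
  induction N using Nat.strong_induction_on with
  | _ N IH =>
    intro ρ hm σ n hn
    match ρ, hn with
    | [], hn => simpa [cc] using rYn_pure n σ
    | d0 :: τ, hn =>
      obtain ⟨m, rfl⟩ : ∃ m, n = m + 1 := ⟨n - 1, by simp [cc] at hn; omega⟩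
      rw [show rYn (m+1) (σ, d0 :: τ) = rYn m (rYq (σ, d0 :: τ)) from rfl]
      rw [show rYq (σ, d0 :: τ) = (σ, τ) from rfl]
      have hmlt : mm τ < N := by simp [cc, mm, mD] at *; omega
      rw [IH (mm τ) (by omega) τ (le_refl _) σ m (by simp [cc, cD] at hn ⊢; omega)]
      congr 2
      simp [cc, cD]
      omega
    | d1 :: τ, hn =>
      obtain ⟨m, rfl⟩ : ∃ m, n = m + 1 := ⟨n - 1, by omega⟩
      rw [show rYn (m+1) (σ, d1 :: τ) = rYn m (rYq (σ, d1 :: τ)) from rfl]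
      rw [show rYq (σ, d1 :: τ) = rY σ τ from rfl]
      have h2 : rYn m (rY σ τ) = rYn (m+1) (σ, τ) := rfl
      rw [h2]
      have hmlt : mm τ < N := by simp [mm, mD] at *; omega
      rw [IH (mm τ) (by omega) τ (le_refl _) σ (m+1) (by simp [cc, cD] at hn ⊢; omega)]
      congr 2
      simp [cc, cD]
    | d2 :: τ, hn =>
      obtain ⟨m, rfl⟩ : ∃ m, n = m + 1 := ⟨n - 1, by omega⟩
      rw [show rYn (m+1) (σ, d2 :: τ) = rYn m (rYq (σ, d2 :: τ)) from rfl]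
      rw [show rYq (σ, d2 :: τ) = (σ, d0 :: τ) from rfl]
      have hmlt : mm (d0 :: τ) < N := by simp [mm, mD] at *; omega
      rw [IH (mm (d0 :: τ)) (by omega) (d0 :: τ) (le_refl _) σ m
        (by simp [cc, cD] at hn ⊢; omega)]
      congr 2
      simp [cc, cD]
      omega

lemma lXn_pad : ∀ (n : ℕ) (κ : List D),
    lXn n (([d0] : List D), κ) = ([d0], κ ++ List.replicate n d0)
  | 0, κ => by simp [lXn]
  | n+1, κ => by
    rw [show lXn (n+1) (([d0] : List D), κ) = lXn n (lXq ([d0], κ)) from rfl]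
    rw [show lXq (([d0] : List D), κ) = ([d0], κ ++ [d0]) from rfl, lXn_pad n (κ ++ [d0])]
    simp [List.replicate_succ]

lemma lXn_collapse : ∀ (N : ℕ), ∀ (π : List D), Wt π ≤ N → π ≠ [] → ∀ (T : ℕ),
    XX π ≤ T → lXn T (π, []) = ([d0], gl π :: List.replicate (T - XX π) d0) := by
  intro N
  induction N using Nat.strong_induction_on with
  | _ N IH =>
    intro π hw hne T hT
    match π, hne with
    | [d], _ =>
      obtain ⟨m, rfl⟩ : ∃ m, T = m + 1 := ⟨T - 1, by simp [XX] at hT; omega⟩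
      rw [show lXn (m+1) (([d] : List D), []) = lXn m (lXq ([d], [])) from rfl]
      rw [show lXq (([d] : List D), []) = ([d0], [] ++ [d]) from by simp [lXq]]
      rw [List.nil_append, show ([d] : List D) = [] ++ [d] from rfl, lXn_pad m]
      simp [gl, XX]
    | d0 :: a :: s, _ =>
      obtain ⟨m, rfl⟩ : ∃ m, T = m + 1 := ⟨T - 1, by rw [XX_cons0 (by simp)] at hT; omega⟩
      rw [show lXn (m+1) ((d0 :: a :: s : List D), []) = lXn m (lXq (d0 :: a :: s, [])) from rfl]
      rw [show lXq ((d0 :: a :: s : List D), []) = (a :: s, []) from by simp [lXq, lX_cons0]]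
      have hw0 : Wt (d0 :: a :: s) = 1 + Wt (a :: s) := rfl
      have hwlt : Wt (a :: s) < N := by omega
      rw [IH (Wt (a :: s)) (by omega) (a :: s) (le_refl _) (by simp) m
        (by rw [XX_cons0 (by simp)] at hT; omega)]
      have h1 : gl (d0 :: a :: s) = gl (a :: s) := rfl
      have h2 : (m+1) - XX (d0 :: a :: s) = m - XX (a :: s) := by
        rw [XX_cons0 (by simp)]; omega
      rw [h1, h2]
    | d1 :: a :: s, _ =>
      obtain ⟨m, rfl⟩ : ∃ m, T = m + 1 := ⟨T - 1, by rw [XX_cons1 (by simp)] at hT; omega⟩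
      rw [show lXn (m+1) ((d1 :: a :: s : List D), []) = lXn m (lXq (d1 :: a :: s, [])) from rfl]
      rw [show lXq ((d1 :: a :: s : List D), []) = (d0 :: a :: s, []) from by simp [lXq, lX_cons1]]
      have hw1 : Wt (d1 :: a :: s) = 2 + Wt (a :: s) := rfl
      have hw0 : Wt (d0 :: a :: s) = 1 + Wt (a :: s) := rfl
      have hwlt : Wt (d0 :: a :: s) < N := by omega
      rw [IH (Wt (d0 :: a :: s)) (by omega) (d0 :: a :: s) (le_refl _) (by simp) m
        (by rw [XX_cons0 (by simp)]; rw [XX_cons1 (by simp)] at hT; omega)]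
      have h1 : gl (d0 :: a :: s) = gl (d1 :: a :: s) := rfl
      have h2 : (m+1) - XX (d1 :: a :: s) = m - XX (d0 :: a :: s) := by
        rw [XX_cons0 (by simp), XX_cons1 (by simp)]; omega
      rw [h1, h2]
    | d2 :: a :: s, _ =>
      have hpos : 1 ≤ XX (a :: s) := XX_pos (a :: s) (by simp)
      have hT' : XX (a :: s) ≤ T := by rw [XX_cons2 (by simp)] at hT; exact hT
      obtain ⟨m, rfl⟩ : ∃ m, T = m + 1 := ⟨T - 1, by omega⟩
      rw [show lXn (m+1) ((d2 :: a :: s : List D), []) = lXn m (lXq (d2 :: a :: s, [])) from rfl]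
      rw [show lXq ((d2 :: a :: s : List D), []) = lXq (a :: s, []) from by
        simp only [lXq, lX_cons2]]
      rw [show lXn m (lXq (a :: s, [])) = lXn (m+1) (a :: s, []) from rfl]
      have hw2 : Wt (d2 :: a :: s) = 3 + Wt (a :: s) := rfl
      have hwlt : Wt (a :: s) < N := by omega
      rw [IH (Wt (a :: s)) (by omega) (a :: s) (le_refl _) (by simp) (m+1) hT']
      rw [XX_cons2 (by simp)]
      rfl

/-! ### probe machinery -/

def bhn : ℕ → List D → List D
  | 0, σ => σ
  | n+1, σ => bhn n (bh σ)

def sigE (i : ℕ) (q : Q) : List D := (rEn i q).1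
def ccE (i : ℕ) (q : Q) : ℕ := cc (rEn i q).2

lemma bh_ne_nil {σ : List D} (h : σ ≠ []) : bh σ ≠ [] := by
  cases σ with
  | nil => exact absurd rfl h
  | cons a s => simp [bh]

lemma bhn_ne_nil : ∀ (n : ℕ) {σ : List D}, σ ≠ [] → bhn n σ ≠ []
  | 0, _, h => h
  | n+1, σ, h => bhn_ne_nil n (bh_ne_nil h)

lemma bh_append {σ : List D} (l : List D) (h : σ ≠ []) : bh (σ ++ l) = bh σ ++ l := by
  cases σ with
  | nil => exact absurd rfl h
  | cons a s => rfl

lemma bhn_append : ∀ (n : ℕ) {σ : List D} (l : List D), σ ≠ [] →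
    bhn n (σ ++ l) = bhn n σ ++ l
  | 0, _, l, _ => rfl
  | n+1, σ, l, h => by
    rw [show bhn (n+1) (σ ++ l) = bhn n (bh (σ ++ l)) from rfl, bh_append l h,
      bhn_append n l (bh_ne_nil h)]
    rfl

lemma lEn_pair : ∀ (n : ℕ) (σ ρ : List D), lEn n (σ, ρ) = (bhn n σ, ρ)
  | 0, σ, ρ => rfl
  | n+1, σ, ρ => by
    rw [show lEn (n+1) (σ, ρ) = lEn n (lE (σ, ρ)) from rfl,
      show lE (σ, ρ) = (bh σ, ρ) from rfl, lEn_pair n (bh σ) ρ]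
    rfl

lemma cc_rep : ∀ (n : ℕ), cc (List.replicate n d0) = n
  | 0 => rfl
  | n+1 => by rw [List.replicate_succ]; show 1 + cc (List.replicate n d0) = n + 1
              rw [cc_rep n]; omega

lemma toM_ypow : ∀ (a : ℕ), toM (List.replicate (a+1) d0, []) = Y ^ a
  | 0 => by simp [toM, Lm, Rm, Ep]
  | a+1 => by
    have ih := toM_ypow a
    simp only [toM, Rm, mul_one] at ih ⊢
    rw [List.replicate_succ]
    rw [Lm_cons d0 (by simp), ih]
    simp [Ep, pow_succ']

lemma probe_val (q : Q) (hq : q.1 ≠ []) (i j K T K' : ℕ)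
    (hK : ccE i q + 1 ≤ K)
    (hT : cst (bhn j (sigE i q)) + (K - ccE i q) ≤ T)
    (hK' : T + 2 ≤ K') :
    (X ^ T * E ^ j) * toM q * (E ^ i * Y ^ (K + K')) =
      Y ^ (K' + cst (bhn j (sigE i q)) + K - ccE i q - T - 1) := by
  have hq1 : (rEn i q).1 ≠ [] := rEn_fst_ne i hq
  have hm1pos : 1 ≤ K - ccE i q := by omega
  have e1 : rYn K (rEn i q) = (sigE i q ++ List.replicate (K - ccE i q) d0, []) := by
    have h := rYn_collapse (mm (rEn i q).2) (rEn i q).2 (le_refl _) (rEn i q).1 K hK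
    rw [Prod.mk.eta] at h
    exact h
  have e2 : lEn j (rYn K (rEn i q)) =
      (bhn j (sigE i q) ++ List.replicate (K - ccE i q) d0, []) := by
    rw [e1, lEn_pair, bhn_append j (σ := sigE i q) (List.replicate (K - ccE i q) d0) hq1]
  have hXX : XX (bhn j (sigE i q) ++ List.replicate (K - ccE i q) d0) =
      cst (bhn j (sigE i q)) + (K - ccE i q) := XX_append_rep _ _ hm1pos
  have hne2 : bhn j (sigE i q) ++ List.replicate (K - ccE i q) d0 ≠ [] := by
    have h2 := bhn_ne_nil j (σ := sigE i q) hq1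
    cases hcc : bhn j (sigE i q) <;> simp_all
  set s := T - (cst (bhn j (sigE i q)) + (K - ccE i q)) with hs
  have e3 : lXn T (lEn j (rYn K (rEn i q))) =
      ([d0], d0 :: List.replicate s d0) := by
    rw [e2, lXn_collapse (Wt (bhn j (sigE i q) ++ List.replicate (K - ccE i q) d0)) _
      (le_refl _) hne2 T (by omega), hXX, gl_append_rep _ _ hm1pos]
  have e4 : rYn K' (lXn T (lEn j (rYn K (rEn i q)))) =
      (List.replicate (K' - s - 1 + 1) d0, []) := by
    rw [e3]
    have hrep : (d0 :: List.replicate s d0) = List.replicate (s + 1) d0 := by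
      rw [List.replicate_succ]
    rw [hrep]
    have hccs : cc (List.replicate (s+1) d0) = s + 1 := cc_rep (s+1)
    have h := rYn_collapse (mm (List.replicate (s+1) d0)) (List.replicate (s+1) d0)
      (le_refl _) [d0] K' (by rw [hccs]; omega)
    rw [h, hccs]
    have h2 : ([d0] : List D) ++ List.replicate (K' - (s+1)) d0 =
        List.replicate (K' - s - 1 + 1) d0 := by
      have h3 : K' - (s+1) = K' - s - 1 := by omega
      rw [List.singleton_append, ← List.replicate_succ, h3]
    rw [h2]
  have t1 : toM (rEn i q) = toM q * E ^ i := S_rEn i q hq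
  have t2 : toM (rYn K (rEn i q)) = toM q * E ^ i * Y ^ K := by
    rw [S_rYn K _ hq1, t1]
  have hne3 : (rYn K (rEn i q)).1 ≠ [] := rYn_fst_ne K hq1
  have t3 : toM (lEn j (rYn K (rEn i q))) = E ^ j * (toM q * E ^ i * Y ^ K) := by
    rw [S_lEn j _ hne3, t2]
  have hne4 : (lEn j (rYn K (rEn i q))).1 ≠ [] := lEn_fst_ne j hne3
  have t4 : toM (lXn T (lEn j (rYn K (rEn i q)))) =
      X ^ T * (E ^ j * (toM q * E ^ i * Y ^ K)) := by
    rw [S_lXn T _ hne4, t3]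
  have hne5 : (lXn T (lEn j (rYn K (rEn i q)))).1 ≠ [] := lXn_fst_ne T hne4
  have t5 : toM (rYn K' (lXn T (lEn j (rYn K (rEn i q))))) =
      X ^ T * (E ^ j * (toM q * E ^ i * Y ^ K)) * Y ^ K' := by
    rw [S_rYn K' _ hne5, t4]
  rw [e4, toM_ypow] at t5
  have hfin : (X ^ T * E ^ j) * toM q * (E ^ i * Y ^ (K + K')) =
      X ^ T * (E ^ j * (toM q * E ^ i * Y ^ K)) * Y ^ K' := by
    rw [pow_add]
    simp only [mul_assoc]
  rw [hfin, ← t5]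
  congr 1
  omega


/-! ### computation helpers for the blindness analysis -/

def bmpn : ℕ → D → D
  | 0, d => d
  | n+1, d => bmpn n (bump d)

def bln : ℕ → List D → List D
  | 0, σ => σ
  | n+1, σ => bln n (bl σ)

@[simp] lemma bmpn0 (d : D) : bmpn 0 d = d := rfl
@[simp] lemma bmpn1 (d : D) : bmpn 1 d = bump d := rfl
@[simp] lemma bmpn2 (d : D) : bmpn 2 d = bump (bump d) := rfl
@[simp] lemma bhn0 (σ : List D) : bhn 0 σ = σ := rfl

lemma bhn_cons : ∀ (j : ℕ) (d : D) (t : List D), bhn j (d :: t) = bmpn j d :: t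
  | 0, d, t => rfl
  | j+1, d, t => by
    rw [show bhn (j+1) (d :: t) = bhn j (bh (d :: t)) from rfl,
      show bh (d :: t) = bump d :: t from rfl, bhn_cons j (bump d) t]
    rfl

lemma bln_single : ∀ (i : ℕ) (d : D), bln i [d] = [bmpn i d]
  | 0, d => rfl
  | i+1, d => by
    rw [show bln (i+1) [d] = bln i (bl [d]) from rfl, show bl [d] = [bump d] from rfl,
      bln_single i (bump d)]
    rfl

lemma bl_cons {t : List D} (d : D) (h : t ≠ []) : bl (d :: t) = d :: bl t := by
  cases t with
  | nil => exact absurd rfl h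
  | cons a s => rfl

lemma bln_cons : ∀ (i : ℕ) (d : D) (t : List D), t ≠ [] → bln i (d :: t) = d :: bln i t
  | 0, d, t, _ => rfl
  | i+1, d, t, h => by
    rw [show bln (i+1) (d :: t) = bln i (bl (d :: t)) from rfl, bl_cons d h,
      bln_cons i d (bl t) (bl_ne_nil h)]
    rfl

lemma gl_bl : ∀ (σ : List D), σ ≠ [] → gl (bl σ) = bump (gl σ)
  | [], h => absurd rfl h
  | [d], _ => rfl
  | d :: a :: s, _ => by
    rw [bl_cons d (by simp), gl_cons d (bl_ne_nil (by simp)), gl_cons d (by simp)]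
    exact gl_bl (a :: s) (by simp)

lemma cst_bl : ∀ (σ : List D), σ ≠ [] →
    cst (bl σ) + cstD (gl σ) = cst σ + cstD (bump (gl σ))
  | [], h => absurd rfl h
  | [d], _ => by simp [bl, cst, gl]; omega
  | d :: a :: s, _ => by
    rw [bl_cons d (by simp), gl_cons d (by simp)]
    show cstD d + cst (bl (a :: s)) + cstD (gl (a :: s)) =
      cstD d + cst (a :: s) + cstD (bump (gl (a :: s)))
    have := cst_bl (a :: s) (by simp)
    omega

lemma bln_ne_nil : ∀ (i : ℕ) {σ : List D}, σ ≠ [] → bln i σ ≠ []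
  | 0, _, h => h
  | i+1, σ, h => bln_ne_nil i (bl_ne_nil h)

lemma gl_bln : ∀ (i : ℕ) (σ : List D), σ ≠ [] → gl (bln i σ) = bmpn i (gl σ)
  | 0, σ, _ => rfl
  | i+1, σ, h => by
    rw [show bln (i+1) σ = bln i (bl σ) from rfl, gl_bln i (bl σ) (bl_ne_nil h),
      gl_bl σ h]
    rfl

lemma cst_bln : ∀ (i : ℕ) (σ : List D), σ ≠ [] →
    cst (bln i σ) + cstD (gl σ) = cst σ + cstD (bmpn i (gl σ))
  | 0, σ, _ => rfl
  | i+1, σ, h => by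
    have h1 := cst_bln i (bl σ) (bl_ne_nil h)
    rw [gl_bl σ h] at h1
    have h2 := cst_bl σ h
    have h3 : bln (i+1) σ = bln i (bl σ) := rfl
    have h4 : bmpn (i+1) (gl σ) = bmpn i (bump (gl σ)) := rfl
    rw [h3, h4]
    omega

/-! ### sigE / ccE computations -/

lemma rEn_cons : ∀ (i : ℕ) (σ τ : List D) (k : D),
    rEn i (σ, k :: τ) = (σ, bmpn i k :: τ)
  | 0, σ, τ, k => rfl
  | i+1, σ, τ, k => by
    rw [show rEn (i+1) (σ, k :: τ) = rEn i (rE (σ, k :: τ)) from rfl,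
      show rE (σ, k :: τ) = (σ, bump k :: τ) from rfl, rEn_cons i σ τ (bump k)]
    rfl

lemma rEn_nil : ∀ (i : ℕ) (σ : List D), rEn i (σ, []) = (bln i σ, [])
  | 0, σ => rfl
  | i+1, σ => by
    rw [show rEn (i+1) (σ, []) = rEn i (rE (σ, [])) from rfl,
      show rE (σ, []) = (bl σ, []) from rfl, rEn_nil i (bl σ)]
    rfl

lemma sigE_cons (i : ℕ) (σ τ : List D) (k : D) : sigE i (σ, k :: τ) = σ := by
  simp [sigE, rEn_cons]

lemma ccE_cons (i : ℕ) (σ τ : List D) (k : D) :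
    ccE i (σ, k :: τ) = cD (bmpn i k) + cc τ := by
  simp [ccE, rEn_cons]
  rfl

lemma sigE_nil (i : ℕ) (σ : List D) : sigE i (σ, []) = bln i σ := by
  simp [sigE, rEn_nil]

lemma ccE_nil (i : ℕ) (σ : List D) : ccE i (σ, []) = 0 := by
  simp [ccE, rEn_nil]
  rfl


/-! ### the probe separation -/

lemma probe_sep {c : Con M} {q q' : Q} (hq : q.1 ≠ []) (hq' : q'.1 ≠ [])
    (j i : ℕ)
    (hsep : cst (bhn j (sigE i q)) + ccE i q' ≠ cst (bhn j (sigE i q')) + ccE i q)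
    (hc : c (toM q) (toM q')) : c = ⊤ := by
  set K := ccE i q + ccE i q' + 1 with hK
  set T := cst (bhn j (sigE i q)) + cst (bhn j (sigE i q')) + K with hT
  set K' := T + 2 with hK'
  have h1 := probe_val q hq i j K T K' (by omega) (by omega) (by omega)
  have h2 := probe_val q' hq' i j K T K' (by omega) (by omega) (by omega)
  have hcc : c ((X ^ T * E ^ j) * toM q * (E ^ i * Y ^ (K + K')))
      ((X ^ T * E ^ j) * toM q' * (E ^ i * Y ^ (K + K'))) :=
    c.mul (c.mul (c.refl _) hc) (c.refl _)
  rw [h1, h2] at hcc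
  apply pp_yy _ hcc
  omega


/-! ### arithmetic bash lemmas -/


@[simp] lemma bump_d0 : bump d0 = d1 := rfl
@[simp] lemma bump_d1 : bump d1 = d2 := rfl
@[simp] lemma bump_d2 : bump d2 = d1 := rfl
@[simp] lemma cstD_d0 : cstD d0 = 1 := rfl
@[simp] lemma cstD_d1 : cstD d1 = 2 := rfl
@[simp] lemma cstD_d2 : cstD d2 = 0 := rfl
@[simp] lemma cD_d0 : cD d0 = 1 := rfl
@[simp] lemma cD_d1 : cD d1 = 0 := rfl
@[simp] lemma cD_d2 : cD d2 = 2 := rfl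

lemma cstD_gl_le : ∀ (w : List D), w ≠ [] → cstD (gl w) ≤ cst w
  | [], h => absurd rfl h
  | [d], _ => by simp [gl, cst]
  | d :: a :: s, _ => by
    rw [gl_cons d (by simp)]
    have := cstD_gl_le (a :: s) (by simp)
    show cstD (gl (a :: s)) ≤ cstD d + cst (a :: s)
    omega

lemma bash_dd {d d' : D} {A A' : ℕ}
    (h0 : cstD d + A = cstD d' + A')
    (h1 : cstD (bump d) + A = cstD (bump d') + A') : d = d' := by
  rcases d <;> rcases d' <;>
    first
      | rfl
      | (exfalso; simp only [bump_d0, bump_d1, bump_d2, cstD_d0, cstD_d1, cstD_d2]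
          at h0 h1; omega)

lemma bashMP_ss {d d' k : D} {Cτ : ℕ}
    (h00 : cstD d = cstD d' + (cD k + Cτ))
    (h10 : cstD (bump d) = cstD (bump d') + (cD k + Cτ))
    (h01 : cstD d = cstD (bump d') + (cD (bump k) + Cτ))
    (h11 : cstD (bump d) = cstD (bump (bump d')) + (cD (bump k) + Cτ)) : False := by
  rcases d <;> rcases d' <;> rcases k <;>
    simp only [bump_d0, bump_d1, bump_d2, cstD_d0, cstD_d1, cstD_d2, cD_d0, cD_d1, cD_d2]
      at h00 h10 h01 h11 <;> omega

lemma bashMP_ls {d d' k : D} {Ct Cτ : ℕ}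
    (h00 : cstD d + Ct = cstD d' + (cD k + Cτ))
    (h10 : cstD (bump d) + Ct = cstD (bump d') + (cD k + Cτ))
    (h01 : cstD d + Ct = cstD (bump d') + (cD (bump k) + Cτ))
    (h11 : cstD (bump d) + Ct = cstD (bump (bump d')) + (cD (bump k) + Cτ)) : False := by
  rcases d <;> rcases d' <;> rcases k <;>
    simp only [bump_d0, bump_d1, bump_d2, cstD_d0, cstD_d1, cstD_d2, cD_d0, cD_d1, cD_d2]
      at h00 h10 h01 h11 <;> omega

lemma bashMP_sl {d d' k g : D} {B0 B1 Cτ : ℕ}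
    (h00 : cstD d = cstD d' + B0 + (cD k + Cτ))
    (h10 : cstD (bump d) = cstD (bump d') + B0 + (cD k + Cτ))
    (h01 : cstD d = cstD d' + B1 + (cD (bump k) + Cτ))
    (h11 : cstD (bump d) = cstD (bump d') + B1 + (cD (bump k) + Cτ))
    (hrel : B1 + cstD g = B0 + cstD (bump g))
    (hgB : cstD g ≤ B0) : False := by
  rcases d <;> rcases d' <;> rcases k <;> rcases g <;>
    simp only [bump_d0, bump_d1, bump_d2, cstD_d0, cstD_d1, cstD_d2, cD_d0, cD_d1, cD_d2]
      at h00 h10 h01 h11 hrel hgB <;> omega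


@[simp] lemma bln0 (σ : List D) : bln 0 σ = σ := rfl
@[simp] lemma cst_nil : cst [] = 0 := rfl
@[simp] lemma cst_cons (k : D) (r : List D) : cst (k :: r) = cstD k + cst r := rfl

lemma Wt_pos {σ : List D} (h : σ ≠ []) : 1 ≤ Wt σ := by
  cases σ with
  | nil => exact absurd rfl h
  | cons a s => cases a <;> simp [Wt, wD] <;> omega

/-! ### congruence transport for single steps -/

variable {c : Con M}

lemma c_rY {q q' : Q} (hq : q.1 ≠ []) (hq' : q'.1 ≠ [])
    (hc : c (toM q) (toM q')) : c (toM (rYq q)) (toM (rYq q')) := by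
  rw [show rYq q = rY q.1 q.2 from rfl, show rYq q' = rY q'.1 q'.2 from rfl,
    S_rY q.1 q.2 hq, S_rY q'.1 q'.2 hq']
  exact c.mul hc (c.refl Y)

lemma c_rE {q q' : Q} (hq : q.1 ≠ []) (hq' : q'.1 ≠ [])
    (hc : c (toM q) (toM q')) : c (toM (rE q)) (toM (rE q')) := by
  rw [S_rE q hq, S_rE q' hq']
  exact c.mul hc (c.refl E)

lemma c_lX {q q' : Q} (hq : q.1 ≠ []) (hq' : q'.1 ≠ [])
    (hc : c (toM q) (toM q')) : c (toM (lXq q)) (toM (lXq q')) := by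
  rw [show lXq q = lX q.1 q.2 from rfl, show lXq q' = lX q'.1 q'.2 from rfl,
    S_lX q.1 q.2 hq, S_lX q'.1 q'.2 hq']
  exact c.mul (c.refl X) hc

lemma c_lE {q q' : Q} (hq : q.1 ≠ []) (hq' : q'.1 ≠ [])
    (hc : c (toM q) (toM q')) : c (toM (lE q)) (toM (lE q')) := by
  rw [S_lE q hq, S_lE q' hq']
  exact c.mul (c.refl E) hc

/-! ### the mixed-pure branch -/

lemma mp_branch (N : ℕ)
    (IH : ∀ m, m < N → ∀ q q' : Q, 100 * (Wt q.1 + Wt q'.1) + mm q.2 + mm q'.2 ≤ m →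
      q.1 ≠ [] → q'.1 ≠ [] → q ≠ q' → c (toM q) (toM q') → c = ⊤)
    (σ σ' τ : List D) (k : D)
    (hμ : 100 * (Wt σ + Wt σ') + mm (k :: τ) ≤ N)
    (hσ : σ ≠ []) (hσ' : σ' ≠ [])
    (h00 : cst (bhn 0 (sigE 0 (σ, k :: τ))) + ccE 0 (σ', ([] : List D)) =
      cst (bhn 0 (sigE 0 (σ', ([] : List D)))) + ccE 0 (σ, k :: τ))
    (h10 : cst (bhn 1 (sigE 0 (σ, k :: τ))) + ccE 0 (σ', ([] : List D)) =
      cst (bhn 1 (sigE 0 (σ', ([] : List D)))) + ccE 0 (σ, k :: τ))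
    (h01 : cst (bhn 0 (sigE 1 (σ, k :: τ))) + ccE 1 (σ', ([] : List D)) =
      cst (bhn 0 (sigE 1 (σ', ([] : List D)))) + ccE 1 (σ, k :: τ))
    (h11 : cst (bhn 1 (sigE 1 (σ, k :: τ))) + ccE 1 (σ', ([] : List D)) =
      cst (bhn 1 (sigE 1 (σ', ([] : List D)))) + ccE 1 (σ, k :: τ))
    (hc : c (toM (σ, k :: τ)) (toM (σ', []))) : c = ⊤ := by
  simp only [sigE_cons, ccE_cons, sigE_nil, ccE_nil, bhn0, bln0, bmpn0, bmpn1,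
    add_zero] at h00 h10 h01 h11
  cases σ with
  | nil => exact absurd rfl hσ
  | cons d t =>
  cases σ' with
  | nil => exact absurd rfl hσ'
  | cons d' t' =>
  cases t with
  | nil =>
    -- σ = [d]
    have e0 : cst [d] = cstD d + 0 := rfl
    have eA : cst (bhn 1 [d]) = cstD (bump d) := by
      rw [show ([d] : List D) = d :: [] from rfl, bhn_cons]; simp
    cases t' with
    | nil =>
      exfalso
      have e0' : cst [d'] = cstD d' + 0 := rfl
      have eB : cst (bln 1 [d']) = cstD (bump d') := by
        rw [bln_single]; simp
      have eC : cst (bhn 1 (bln 1 [d'])) = cstD (bump (bump d')) := by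
        rw [bln_single, show ([bmpn 1 d'] : List D) = bmpn 1 d' :: [] from rfl, bhn_cons]
        simp
      have eA' : cst (bhn 1 [d']) = cstD (bump d') := by
        rw [show ([d'] : List D) = d' :: [] from rfl, bhn_cons]; simp
      exact bashMP_ss (d := d) (d' := d') (k := k) (Cτ := cc τ)
        (by omega) (by omega) (by omega) (by omega)
    | cons a' s' =>
      exfalso
      have e0' : cst (d' :: a' :: s') = cstD d' + cst (a' :: s') := rfl
      have eD : cst (bln 1 (d' :: a' :: s')) = cstD d' + cst (bln 1 (a' :: s')) := by
        rw [bln_cons 1 d' (a' :: s') (by simp)]; simp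
      have eE : cst (bhn 1 (bln 1 (d' :: a' :: s'))) =
          cstD (bump d') + cst (bln 1 (a' :: s')) := by
        rw [bln_cons 1 d' (a' :: s') (by simp), bhn_cons]; simp
      have eE2 : cst (bhn 1 (d' :: a' :: s')) = cstD (bump d') + cst (a' :: s') := by
        rw [bhn_cons]; simp
      have hrel := cst_bln 1 (a' :: s') (by simp)
      rw [bmpn1] at hrel
      have hgB := cstD_gl_le (a' :: s') (by simp)
      exact bashMP_sl (d := d) (d' := d') (k := k) (g := gl (a' :: s'))
        (B0 := cst (a' :: s')) (B1 := cst (bln 1 (a' :: s'))) (Cτ := cc τ)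
        (by omega) (by omega) (by omega) (by omega) (by omega) (by omega)
  | cons a s =>
    have e0 : cst (d :: a :: s) = cstD d + cst (a :: s) := rfl
    have eA : cst (bhn 1 (d :: a :: s)) = cstD (bump d) + cst (a :: s) := by
      rw [bhn_cons]; simp
    cases t' with
    | nil =>
      exfalso
      have e0' : cst [d'] = cstD d' + 0 := rfl
      have eB : cst (bln 1 [d']) = cstD (bump d') := by
        rw [bln_single]; simp
      have eC : cst (bhn 1 (bln 1 [d'])) = cstD (bump (bump d')) := by
        rw [bln_single, show ([bmpn 1 d'] : List D) = bmpn 1 d' :: [] from rfl, bhn_cons]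
        simp
      have eA' : cst (bhn 1 [d']) = cstD (bump d') := by
        rw [show ([d'] : List D) = d' :: [] from rfl, bhn_cons]; simp
      exact bashMP_ls (d := d) (d' := d') (k := k) (Ct := cst (a :: s)) (Cτ := cc τ)
        (by omega) (by omega) (by omega) (by omega)
    | cons a' s' =>
      have e0' : cst (d' :: a' :: s') = cstD d' + cst (a' :: s') := rfl
      have eE2 : cst (bhn 1 (d' :: a' :: s')) = cstD (bump d') + cst (a' :: s') := by
        rw [bhn_cons]; simp
      have hdd : d = d' := bash_dd (A := cst (a :: s))
        (A' := cst (a' :: s') + (cD k + cc τ)) (by omega) (by omega)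
      subst hdd
      have hNbig : 100 ≤ N := by
        have w1 : 1 ≤ Wt (d :: a :: s) := Wt_pos (by simp)
        omega
      cases d with
      | d0 =>
        have hc2 := c_lX (q := (d0 :: a :: s, k :: τ)) (q' := (d0 :: a' :: s', []))
          (by simp) (by simp) hc
        rw [show lXq ((d0 :: a :: s : List D), k :: τ) = (a :: s, k :: τ) from rfl,
          show lXq ((d0 :: a' :: s' : List D), ([] : List D)) = (a' :: s', []) from
          rfl] at hc2
        refine IH (N - 1) (by omega) (a :: s, k :: τ) (a' :: s', []) ?_ (by simp)
          (by simp) ?_ hc2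
        · show 100 * (Wt (a :: s) + Wt (a' :: s')) + mm (k :: τ) + mm [] ≤ N - 1
          have w1 : Wt (d0 :: a :: s) = 1 + Wt (a :: s) := rfl
          have w2 : Wt (d0 :: a' :: s') = 1 + Wt (a' :: s') := rfl
          have m0 : mm ([] : List D) = 0 := rfl
          omega
        · intro h
          have := congrArg Prod.snd h
          simp at this
      | d1 =>
        have hc2 := c_lX (q := (d1 :: a :: s, k :: τ)) (q' := (d1 :: a' :: s', []))
          (by simp) (by simp) hc
        rw [show lXq ((d1 :: a :: s : List D), k :: τ) = (d0 :: a :: s, k :: τ) from rfl,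
          show lXq ((d1 :: a' :: s' : List D), ([] : List D)) = (d0 :: a' :: s', []) from
          rfl] at hc2
        refine IH (N - 1) (by omega) (d0 :: a :: s, k :: τ) (d0 :: a' :: s', []) ?_
          (by simp) (by simp) ?_ hc2
        · show 100 * (Wt (d0 :: a :: s) + Wt (d0 :: a' :: s')) + mm (k :: τ) + mm [] ≤ N - 1
          have w1 : Wt (d1 :: a :: s) = 2 + Wt (a :: s) := rfl
          have w2 : Wt (d1 :: a' :: s') = 2 + Wt (a' :: s') := rfl
          have w3 : Wt (d0 :: a :: s) = 1 + Wt (a :: s) := rfl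
          have w4 : Wt (d0 :: a' :: s') = 1 + Wt (a' :: s') := rfl
          have m0 : mm ([] : List D) = 0 := rfl
          omega
        · intro h
          have := congrArg Prod.snd h
          simp at this
      | d2 =>
        have hc3 := c_lE (q := (d2 :: a :: s, k :: τ)) (q' := (d2 :: a' :: s', []))
          (by simp) (by simp) hc
        rw [show lE ((d2 :: a :: s : List D), k :: τ) = (d1 :: a :: s, k :: τ) from rfl,
          show lE ((d2 :: a' :: s' : List D), ([] : List D)) = (d1 :: a' :: s', []) from
          rfl] at hc3
        refine IH (N - 1) (by omega) (d1 :: a :: s, k :: τ) (d1 :: a' :: s', []) ?_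
          (by simp) (by simp) ?_ hc3
        · show 100 * (Wt (d1 :: a :: s) + Wt (d1 :: a' :: s')) + mm (k :: τ) + mm [] ≤ N - 1
          have w1 : Wt (d2 :: a :: s) = 3 + Wt (a :: s) := rfl
          have w2 : Wt (d2 :: a' :: s') = 3 + Wt (a' :: s') := rfl
          have w3 : Wt (d1 :: a :: s) = 2 + Wt (a :: s) := rfl
          have w4 : Wt (d1 :: a' :: s') = 2 + Wt (a' :: s') := rfl
          have m0 : mm ([] : List D) = 0 := rfl
          omega
        · intro h
          have := congrArg Prod.snd h
          simp at this


/-! ### main separation theorem -/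

theorem sep_main : ∀ (N : ℕ) (q q' : Q),
    100 * (Wt q.1 + Wt q'.1) + mm q.2 + mm q'.2 ≤ N →
    q.1 ≠ [] → q'.1 ≠ [] → q ≠ q' → c (toM q) (toM q') → c = ⊤ := by
  intro N
  induction N using Nat.strong_induction_on with
  | _ N IH =>
  intro q q' hμ0 hq hq' hne hc
  obtain ⟨σ, ρ⟩ := q
  obtain ⟨σ', ρ'⟩ := q'
  have hσ : σ ≠ [] := hq
  have hσ' : σ' ≠ [] := hq'
  have hμ : 100 * (Wt σ + Wt σ') + mm ρ + mm ρ' ≤ N := hμ0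
  by_cases h00 : cst (bhn 0 (sigE 0 (σ, ρ))) + ccE 0 (σ', ρ') =
      cst (bhn 0 (sigE 0 (σ', ρ'))) + ccE 0 (σ, ρ)
  swap
  · exact probe_sep hq hq' 0 0 h00 hc
  by_cases h10 : cst (bhn 1 (sigE 0 (σ, ρ))) + ccE 0 (σ', ρ') =
      cst (bhn 1 (sigE 0 (σ', ρ'))) + ccE 0 (σ, ρ)
  swap
  · exact probe_sep hq hq' 1 0 h10 hc
  by_cases h01 : cst (bhn 0 (sigE 1 (σ, ρ))) + ccE 1 (σ', ρ') =
      cst (bhn 0 (sigE 1 (σ', ρ'))) + ccE 1 (σ, ρ)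
  swap
  · exact probe_sep hq hq' 0 1 h01 hc
  by_cases h11 : cst (bhn 1 (sigE 1 (σ, ρ))) + ccE 1 (σ', ρ') =
      cst (bhn 1 (sigE 1 (σ', ρ'))) + ccE 1 (σ, ρ)
  swap
  · exact probe_sep hq hq' 1 1 h11 hc
  cases ρ with
  | nil =>
    cases ρ' with
    | cons k' τ' =>
      -- pure vs mixed : use mp_branch with swapped roles
      have m0 : mm ([] : List D) = 0 := rfl
      exact mp_branch N IH σ' σ τ' k' (by omega) hσ' hσ
        h00.symm h10.symm h01.symm h11.symm (c.symm hc)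
    | nil =>
      -- pure vs pure
      simp only [sigE_nil, ccE_nil, bhn0, bln0, add_zero] at h00 h10
      cases σ with
      | nil => exact absurd rfl hσ
      | cons d t =>
      cases σ' with
      | nil => exact absurd rfl hσ'
      | cons d' t' =>
      have e0 : cst (d :: t) = cstD d + cst t := rfl
      have e0' : cst (d' :: t') = cstD d' + cst t' := rfl
      have eA : cst (bhn 1 (d :: t)) = cstD (bump d) + cst t := by rw [bhn_cons]; simp
      have eA' : cst (bhn 1 (d' :: t')) = cstD (bump d') + cst t' := by
        rw [bhn_cons]; simp
      have hdd : d = d' := bash_dd (A := cst t) (A' := cst t') (by omega) (by omega)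
      subst hdd
      have hNbig : 100 ≤ N := by
        have w1 : 1 ≤ Wt (d :: t) := Wt_pos (by simp)
        omega
      clear h00 h10 h01 h11 e0 e0' eA eA'
      cases t with
      | nil =>
        cases t' with
        | nil => exact absurd rfl hne
        | cons a' s' =>
          -- σ = [d] singleton, σ' = d :: a' :: s'
          have hc2 : c (toM (lXq ([d], ([] : List D)))) (toM (lXq (d :: a' :: s', ([] : List D)))) :=
            c_lX (by simp) (by simp) hc
          have hc3 : c (toM (lE ([d], ([] : List D)))) (toM (lE (d :: a' :: s', ([] : List D)))) :=
            c_lE (by simp) (by simp) hc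
          cases d with
          | d0 =>
            rw [show lXq (([d0] : List D), ([] : List D)) = ([d0], [d0]) from rfl,
              show lXq ((d0 :: a' :: s' : List D), ([] : List D)) = (a' :: s', []) from rfl] at hc2
            refine IH (N - 1) (by omega) ([d0], [d0]) (a' :: s', []) ?_ (by simp)
              (by simp) ?_ hc2
            · show 100 * (Wt [d0] + Wt (a' :: s')) + mm [d0] + mm [] ≤ N - 1
              have w1 : Wt (d0 :: a' :: s') = 1 + Wt (a' :: s') := rfl
              have w2 : Wt ([d0] : List D) = 1 := rfl
              have m1 : mm ([d0] : List D) = 1 := rfl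
              have m0 : mm ([] : List D) = 0 := rfl
              omega
            · intro h
              have := congrArg Prod.snd h
              simp at this
          | d1 =>
            rw [show lXq (([d1] : List D), ([] : List D)) = ([d0], [d1]) from rfl,
              show lXq ((d1 :: a' :: s' : List D), ([] : List D)) = (d0 :: a' :: s', []) from rfl] at hc2
            refine IH (N - 1) (by omega) ([d0], [d1]) (d0 :: a' :: s', []) ?_ (by simp)
              (by simp) ?_ hc2
            · show 100 * (Wt [d0] + Wt (d0 :: a' :: s')) + mm [d1] + mm [] ≤ N - 1
              have w1 : Wt (d1 :: a' :: s') = 2 + Wt (a' :: s') := rfl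
              have w2 : Wt (d0 :: a' :: s') = 1 + Wt (a' :: s') := rfl
              have w3 : Wt ([d0] : List D) = 1 := rfl
              have w4 : Wt ([d1] : List D) = 2 := rfl
              have m1 : mm ([d1] : List D) = 3 := rfl
              have m0 : mm ([] : List D) = 0 := rfl
              omega
            · intro h
              have := congrArg Prod.snd h
              simp at this
          | d2 =>
            rw [show lE (([d2] : List D), ([] : List D)) = ([d1], []) from rfl,
              show lE ((d2 :: a' :: s' : List D), ([] : List D)) = (d1 :: a' :: s', []) from rfl] at hc3
            refine IH (N - 1) (by omega) ([d1], []) (d1 :: a' :: s', []) ?_ (by simp)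
              (by simp) ?_ hc3
            · show 100 * (Wt [d1] + Wt (d1 :: a' :: s')) + mm [] + mm [] ≤ N - 1
              have w1 : Wt (d2 :: a' :: s') = 3 + Wt (a' :: s') := rfl
              have w2 : Wt (d1 :: a' :: s') = 2 + Wt (a' :: s') := rfl
              have w3 : Wt ([d2] : List D) = 3 := rfl
              have w4 : Wt ([d1] : List D) = 2 := rfl
              have m0 : mm ([] : List D) = 0 := rfl
              omega
            · intro h
              have h1 := congrArg Prod.fst h
              simp at h1
      | cons a s =>
        cases t' with
        | nil =>
          -- σ = d :: a :: s, σ' = [d]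
          have hc2 : c (toM (lXq (d :: a :: s, ([] : List D)))) (toM (lXq ([d], ([] : List D)))) :=
            c_lX (by simp) (by simp) hc
          have hc3 : c (toM (lE (d :: a :: s, ([] : List D)))) (toM (lE ([d], ([] : List D)))) :=
            c_lE (by simp) (by simp) hc
          cases d with
          | d0 =>
            rw [show lXq ((d0 :: a :: s : List D), ([] : List D)) = (a :: s, []) from rfl,
              show lXq (([d0] : List D), ([] : List D)) = ([d0], [d0]) from rfl] at hc2
            refine IH (N - 1) (by omega) (a :: s, []) ([d0], [d0]) ?_ (by simp)
              (by simp) ?_ hc2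
            · show 100 * (Wt (a :: s) + Wt [d0]) + mm [] + mm [d0] ≤ N - 1
              have w1 : Wt (d0 :: a :: s) = 1 + Wt (a :: s) := rfl
              have w2 : Wt ([d0] : List D) = 1 := rfl
              have m1 : mm ([d0] : List D) = 1 := rfl
              have m0 : mm ([] : List D) = 0 := rfl
              omega
            · intro h
              have := congrArg Prod.snd h
              simp at this
          | d1 =>
            rw [show lXq ((d1 :: a :: s : List D), ([] : List D)) = (d0 :: a :: s, []) from rfl,
              show lXq (([d1] : List D), ([] : List D)) = ([d0], [d1]) from rfl] at hc2
            refine IH (N - 1) (by omega) (d0 :: a :: s, []) ([d0], [d1]) ?_ (by simp)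
              (by simp) ?_ hc2
            · show 100 * (Wt (d0 :: a :: s) + Wt [d0]) + mm [] + mm [d1] ≤ N - 1
              have w1 : Wt (d1 :: a :: s) = 2 + Wt (a :: s) := rfl
              have w2 : Wt (d0 :: a :: s) = 1 + Wt (a :: s) := rfl
              have w3 : Wt ([d0] : List D) = 1 := rfl
              have w4 : Wt ([d1] : List D) = 2 := rfl
              have m1 : mm ([d1] : List D) = 3 := rfl
              have m0 : mm ([] : List D) = 0 := rfl
              omega
            · intro h
              have := congrArg Prod.snd h
              simp at this
          | d2 =>
            rw [show lE ((d2 :: a :: s : List D), ([] : List D)) = (d1 :: a :: s, []) from rfl,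
              show lE (([d2] : List D), ([] : List D)) = ([d1], []) from rfl] at hc3
            refine IH (N - 1) (by omega) (d1 :: a :: s, []) ([d1], []) ?_ (by simp)
              (by simp) ?_ hc3
            · show 100 * (Wt (d1 :: a :: s) + Wt [d1]) + mm [] + mm [] ≤ N - 1
              have w1 : Wt (d2 :: a :: s) = 3 + Wt (a :: s) := rfl
              have w2 : Wt (d1 :: a :: s) = 2 + Wt (a :: s) := rfl
              have w3 : Wt ([d2] : List D) = 3 := rfl
              have w4 : Wt ([d1] : List D) = 2 := rfl
              have m0 : mm ([] : List D) = 0 := rfl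
              omega
            · intro h
              have h1 := congrArg Prod.fst h
              simp at h1
        | cons a' s' =>
          -- both non-singleton, same head d
          have hnetails : (a :: s) ≠ (a' :: s') := by
            intro h
            apply hne
            rw [h]
          have hc2 : c (toM (lXq (d :: a :: s, ([] : List D)))) (toM (lXq (d :: a' :: s', ([] : List D)))) :=
            c_lX (by simp) (by simp) hc
          have hc3 : c (toM (lE (d :: a :: s, ([] : List D)))) (toM (lE (d :: a' :: s', ([] : List D)))) :=
            c_lE (by simp) (by simp) hc
          cases d with
          | d0 =>
            rw [show lXq ((d0 :: a :: s : List D), ([] : List D)) = (a :: s, []) from rfl,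
              show lXq ((d0 :: a' :: s' : List D), ([] : List D)) = (a' :: s', []) from rfl] at hc2
            refine IH (N - 1) (by omega) (a :: s, []) (a' :: s', []) ?_ (by simp)
              (by simp) ?_ hc2
            · show 100 * (Wt (a :: s) + Wt (a' :: s')) + mm [] + mm [] ≤ N - 1
              have w1 : Wt (d0 :: a :: s) = 1 + Wt (a :: s) := rfl
              have w2 : Wt (d0 :: a' :: s') = 1 + Wt (a' :: s') := rfl
              have m0 : mm ([] : List D) = 0 := rfl
              omega
            · intro h
              apply hnetails
              rw [Prod.mk.injEq] at h
              exact h.1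
          | d1 =>
            rw [show lXq ((d1 :: a :: s : List D), ([] : List D)) = (d0 :: a :: s, []) from rfl,
              show lXq ((d1 :: a' :: s' : List D), ([] : List D)) = (d0 :: a' :: s', []) from rfl] at hc2
            refine IH (N - 1) (by omega) (d0 :: a :: s, []) (d0 :: a' :: s', []) ?_
              (by simp) (by simp) ?_ hc2
            · show 100 * (Wt (d0 :: a :: s) + Wt (d0 :: a' :: s')) + mm [] + mm [] ≤ N - 1
              have w1 : Wt (d1 :: a :: s) = 2 + Wt (a :: s) := rfl
              have w2 : Wt (d1 :: a' :: s') = 2 + Wt (a' :: s') := rfl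
              have w3 : Wt (d0 :: a :: s) = 1 + Wt (a :: s) := rfl
              have w4 : Wt (d0 :: a' :: s') = 1 + Wt (a' :: s') := rfl
              have m0 : mm ([] : List D) = 0 := rfl
              omega
            · intro h
              apply hnetails
              rw [Prod.mk.injEq] at h
              obtain ⟨h1, -⟩ := h
              injection h1
          | d2 =>
            rw [show lE ((d2 :: a :: s : List D), ([] : List D)) = (d1 :: a :: s, []) from rfl,
              show lE ((d2 :: a' :: s' : List D), ([] : List D)) = (d1 :: a' :: s', []) from rfl] at hc3
            refine IH (N - 1) (by omega) (d1 :: a :: s, []) (d1 :: a' :: s', []) ?_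
              (by simp) (by simp) ?_ hc3
            · show 100 * (Wt (d1 :: a :: s) + Wt (d1 :: a' :: s')) + mm [] + mm [] ≤ N - 1
              have w1 : Wt (d2 :: a :: s) = 3 + Wt (a :: s) := rfl
              have w2 : Wt (d2 :: a' :: s') = 3 + Wt (a' :: s') := rfl
              have w3 : Wt (d1 :: a :: s) = 2 + Wt (a :: s) := rfl
              have w4 : Wt (d1 :: a' :: s') = 2 + Wt (a' :: s') := rfl
              have m0 : mm ([] : List D) = 0 := rfl
              omega
            · intro h
              apply hnetails
              rw [Prod.mk.injEq] at h
              obtain ⟨h1, -⟩ := h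
              injection h1
  | cons k τ =>
    cases ρ' with
    | nil =>
      have m0 : mm ([] : List D) = 0 := rfl
      exact mp_branch N IH σ σ' τ k (by omega) hσ hσ' h00 h10 h01 h11 hc
    | cons k' τ' =>
      -- mixed vs mixed
      simp only [sigE_cons, ccE_cons, bhn0, bmpn0, bmpn1] at h00 h01
      have hkk : k = k' := by
        rcases k <;> rcases k' <;>
          first
            | rfl
            | (exfalso
               simp only [bump_d0, bump_d1, bump_d2, cD_d0, cD_d1, cD_d2] at h00 h01
               omega)
      subst hkk
      have hNbig : 1 ≤ N := by
        have w1 : 1 ≤ Wt σ := Wt_pos hσ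
        omega
      cases k with
      | d0 =>
        have hc2 : c (toM (rYq (σ, d0 :: τ))) (toM (rYq (σ', d0 :: τ'))) :=
          c_rY hσ hσ' hc
        rw [show rYq (σ, d0 :: τ) = (σ, τ) from rfl,
          show rYq (σ', d0 :: τ') = (σ', τ') from rfl] at hc2
        refine IH (N - 1) (by omega) (σ, τ) (σ', τ') ?_ hσ hσ' ?_ hc2
        · show 100 * (Wt σ + Wt σ') + mm τ + mm τ' ≤ N - 1
          have m1 : mm (d0 :: τ) = 1 + mm τ := rfl
          have m2 : mm (d0 :: τ') = 1 + mm τ' := rfl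
          omega
        · intro h
          exact hne (by rw [Prod.mk.injEq] at h ⊢; exact ⟨h.1, by rw [h.2]⟩)
      | d1 =>
        have hc2 : c (toM (rE (σ, d1 :: τ))) (toM (rE (σ', d1 :: τ'))) :=
          c_rE hσ hσ' hc
        rw [show rE (σ, d1 :: τ) = (σ, d2 :: τ) from rfl,
          show rE (σ', d1 :: τ') = (σ', d2 :: τ') from rfl] at hc2
        refine IH (N - 1) (by omega) (σ, d2 :: τ) (σ', d2 :: τ') ?_ hσ hσ' ?_ hc2
        · show 100 * (Wt σ + Wt σ') + mm (d2 :: τ) + mm (d2 :: τ') ≤ N - 1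
          have m1 : mm (d1 :: τ) = 3 + mm τ := rfl
          have m2 : mm (d1 :: τ') = 3 + mm τ' := rfl
          have m3 : mm (d2 :: τ) = 2 + mm τ := rfl
          have m4 : mm (d2 :: τ') = 2 + mm τ' := rfl
          omega
        · intro h
          apply hne
          rw [Prod.mk.injEq] at h ⊢
          obtain ⟨h3, h4⟩ := h
          injection h4 with _ h5
          exact ⟨h3, by rw [h5]⟩
      | d2 =>
        have hc2 : c (toM (rYq (σ, d2 :: τ))) (toM (rYq (σ', d2 :: τ'))) :=
          c_rY hσ hσ' hc
        rw [show rYq (σ, d2 :: τ) = (σ, d0 :: τ) from rfl,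
          show rYq (σ', d2 :: τ') = (σ', d0 :: τ') from rfl] at hc2
        refine IH (N - 1) (by omega) (σ, d0 :: τ) (σ', d0 :: τ') ?_ hσ hσ' ?_ hc2
        · show 100 * (Wt σ + Wt σ') + mm (d0 :: τ) + mm (d0 :: τ') ≤ N - 1
          have m1 : mm (d2 :: τ) = 2 + mm τ := rfl
          have m2 : mm (d2 :: τ') = 2 + mm τ' := rfl
          have m3 : mm (d0 :: τ) = 1 + mm τ := rfl
          have m4 : mm (d0 :: τ') = 1 + mm τ' := rfl
          omega
        · intro h
          apply hne
          rw [Prod.mk.injEq] at h ⊢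
          obtain ⟨h3, h4⟩ := h
          injection h4 with _ h5
          exact ⟨h3, by rw [h5]⟩


/-! ### normal form of a word -/

def gstep (q : Q) : Alpha → Q
  | .x => rX q
  | .y => rYq q
  | .e => rE q

def q1 : Q := ([d0], [])

def nfQ (w : FreeMonoid Alpha) : Q := List.foldl gstep q1 (FreeMonoid.toList w)

lemma gstep_fst_ne {q : Q} (h : q.1 ≠ []) (a : Alpha) : (gstep q a).1 ≠ [] := by
  cases a
  · exact h
  · exact rYq_fst_ne h
  · exact rE_fst_ne h

lemma S_gstep (q : Q) (h : q.1 ≠ []) (a : Alpha) :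
    toM (gstep q a) = toM q * mkw (.of a) := by
  cases a
  · exact S_rX q
  · exact S_rY q.1 q.2 h
  · exact S_rE q h

lemma nf_fold : ∀ (l : List Alpha) (q : Q), q.1 ≠ [] →
    toM (List.foldl gstep q l) = toM q * mkw (FreeMonoid.ofList l)
  | [], q, _ => by simp
  | a :: l, q, h => by
    rw [show List.foldl gstep q (a :: l) = List.foldl gstep (gstep q a) l from rfl,
      nf_fold l (gstep q a) (gstep_fst_ne h a), S_gstep q h a,
      show FreeMonoid.ofList (a :: l) = FreeMonoid.of a * FreeMonoid.ofList l from rfl]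
    rw [map_mul, mul_assoc]

lemma fold_fst_ne : ∀ (l : List Alpha) (q : Q), q.1 ≠ [] →
    (List.foldl gstep q l).1 ≠ []
  | [], _, h => h
  | a :: l, q, h => fold_fst_ne l (gstep q a) (gstep_fst_ne h a)

lemma nfQ_fst_ne (w : FreeMonoid Alpha) : (nfQ w).1 ≠ [] :=
  fold_fst_ne _ q1 (by simp [q1])

lemma nfQ_sound (w : FreeMonoid Alpha) : mkw w = toM (nfQ w) := by
  rw [nfQ, nf_fold (FreeMonoid.toList w) q1 (by simp [q1])]
  rw [show toM q1 = 1 from by simp [q1, toM, Lm, Rm, Ep], one_mul,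
    FreeMonoid.ofList_toList]

end CF

open CF in
/-- `M` is congruence-free: every congruence on `M` is the equality relation (`⊥`)
or the universal relation (`⊤`). -/
theorem stmt_1 : ∀ c : Con M, c = ⊥ ∨ c = ⊤ := by
  intro c
  by_cases hbot : ∀ a b : M, c a b → a = b
  · left
    refine le_antisymm ?_ bot_le
    intro a b hab
    exact hbot a b hab ▸ (⊥ : Con M).refl a
  · right
    push_neg at hbot
    obtain ⟨a, b, hab, hne⟩ := hbot
    obtain ⟨u, rfl⟩ := PresentedMonoid.surjective_mk (rels := rel) a
    obtain ⟨v, rfl⟩ := PresentedMonoid.surjective_mk (rels := rel) b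
    have h1 : mkw u = toM (nfQ u) := nfQ_sound u
    have h2 : mkw v = toM (nfQ v) := nfQ_sound v
    refine sep_main (c := c)
      (100 * (Wt (nfQ u).1 + Wt (nfQ v).1) + mm (nfQ u).2 + mm (nfQ v).2)
      (nfQ u) (nfQ v) le_rfl (nfQ_fst_ne u) (nfQ_fst_ne v) ?_ ?_
    · intro h
      exact hne (by rw [show PresentedMonoid.mk rel u = mkw u from rfl, h1, h, ← h2])
    · rw [← h1, ← h2]
      exact hab
end

section
/- The monoid M presented by ⟨x, y, e | e³ = e, xey = y, xe²y = x, xy = 1⟩ is simple: for every pair of elements a, b ∈ M there exist p, q ∈ M such that p·a·q = b. In particular, every element of M is J-related to the identity 1. -/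
lemma mrel {a b : FreeMonoid Alpha} (h : rel a b) :
    PresentedMonoid.mk rel a = PresentedMonoid.mk rel b :=
  Quotient.sound (ConGen.Rel.of a b h)

lemma B1 : X * Y = 1 := by
  have := mrel (Or.inr (Or.inr (Or.inr ⟨rfl, rfl⟩)))
  simpa [X, Y, PresentedMonoid.of] using this

lemma B2 : X * E * Y = Y := by
  have := mrel (Or.inr (Or.inl ⟨rfl, rfl⟩))
  simpa [X, Y, E, PresentedMonoid.of] using this

lemma B3 : X * E * E * Y = X := by
  have := mrel (Or.inr (Or.inr (Or.inl ⟨rfl, rfl⟩)))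
  simpa [X, Y, E, PresentedMonoid.of] using this

lemma B4 : E * E * E = E := by
  have := mrel (Or.inl ⟨rfl, rfl⟩)
  simpa [E, PresentedMonoid.of] using this

lemma A1 (z : M) : X * (Y * z) = z := by rw [← mul_assoc, B1, one_mul]
lemma A2 (z : M) : X * (E * (Y * z)) = Y * z := by rw [← mul_assoc, ← mul_assoc, B2]
lemma A2' : X * (E * Y) = Y := by rw [← mul_assoc]; exact B2
lemma A3 (z : M) : X * (E * (E * (Y * z))) = X * z := by
  rw [← mul_assoc, ← mul_assoc, ← mul_assoc, B3]
lemma A3' : X * (E * (E * Y)) = X := by rw [← mul_assoc, ← mul_assoc]; exact B3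
lemma A4 (z : M) : E * (E * (E * z)) = E * z := by rw [← mul_assoc, ← mul_assoc, B4]
lemma A4' : E * (E * E) = E := by rw [← mul_assoc]; exact B4

/-- evaluation of a word -/
def f : List Alpha → M
  | [] => 1
  | a :: t => PresentedMonoid.of rel a * f t

@[simp] lemma f_nil : f [] = 1 := rfl
@[simp] lemma f_cons (a : Alpha) (t : List Alpha) :
    f (a :: t) = PresentedMonoid.of rel a * f t := rfl
@[simp] lemma f_append : ∀ u v : List Alpha, f (u ++ v) = f u * f v := by
  intro u
  induction u with
  | nil => simp
  | cons a t ih => intro v; simp [ih, mul_assoc]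

@[simp] lemma of_x : PresentedMonoid.of rel Alpha.x = X := rfl
@[simp] lemma of_y : PresentedMonoid.of rel Alpha.y = Y := rfl
@[simp] lemma of_e : PresentedMonoid.of rel Alpha.e = E := rfl

lemma XYpow : ∀ n : ℕ, X ^ n * Y ^ n = 1 := by
  intro n
  induction n with
  | zero => simp
  | succ n ih => rw [pow_succ, pow_succ', mul_assoc, A1]; exact ih

lemma collapseL (c d : ℕ) : ∃ c' d', X * (Y ^ c * X ^ d) = Y ^ c' * X ^ d' := by
  cases c with
  | zero => exact ⟨0, d + 1, by simp [pow_succ']⟩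
  | succ c => exact ⟨c, d, by rw [pow_succ', mul_assoc, A1]⟩

lemma collapseR (c d : ℕ) : ∃ c' d', (Y ^ c * X ^ d) * Y = Y ^ c' * X ^ d' := by
  cases d with
  | zero => exact ⟨c + 1, 0, by simp [pow_succ]⟩
  | succ d => exact ⟨c, d, by rw [pow_succ, mul_assoc, mul_assoc, B1, mul_one]⟩

lemma padL1 {a b c d : ℕ} {m : M} (h : X ^ a * m * Y ^ b = Y ^ c * X ^ d) :
    ∃ c' d', X ^ (a + 1) * m * Y ^ b = Y ^ c' * X ^ d' := by
  obtain ⟨c', d', hc⟩ := collapseL c d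
  refine ⟨c', d', ?_⟩
  have h' : X ^ a * (m * Y ^ b) = Y ^ c * X ^ d := by rw [← mul_assoc]; exact h
  calc X ^ (a + 1) * m * Y ^ b = X * (X ^ a * (m * Y ^ b)) := by
        rw [pow_succ', mul_assoc, mul_assoc]
    _ = X * (Y ^ c * X ^ d) := by rw [h']
    _ = Y ^ c' * X ^ d' := hc

lemma padR1 {a b c d : ℕ} {m : M} (h : X ^ a * m * Y ^ b = Y ^ c * X ^ d) :
    ∃ c' d', X ^ a * m * Y ^ (b + 1) = Y ^ c' * X ^ d' := by
  obtain ⟨c', d', hc⟩ := collapseR c d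
  exact ⟨c', d', by rw [pow_succ, ← mul_assoc, h, hc]⟩

lemma lemA : ∀ n (l : List Alpha), l.length ≤ n → Alpha.y ∉ l →
    ∃ a b c d : ℕ, X ^ a * f l * Y ^ b = Y ^ c * X ^ d := by
  intro n
  induction n with
  | zero =>
    intro l hl _
    have : l = [] := List.eq_nil_of_length_eq_zero (Nat.le_zero.mp hl)
    subst this
    exact ⟨0, 0, 0, 0, by simp⟩
  | succ n ih =>
    intro l hl hy
    rcases List.eq_nil_or_concat l with rfl | ⟨t, g, rfl⟩
    · exact ⟨0, 0, 0, 0, by simp⟩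
    rw [List.concat_eq_append] at hl hy ⊢
    cases g with
    | y => exact absurd (by simp) hy
    | x =>
      obtain ⟨a, b, c, d, h⟩ := ih t (by simp at hl ⊢; omega) (fun hm => hy (by simp [hm]))
      refine ⟨a, b + 1, c, d, ?_⟩
      simp only [f_append, f_cons, f_nil, of_x, of_y, of_e, mul_one, one_mul,
        pow_succ', mul_assoc] at h ⊢
      rw [A1]; exact h
    | e =>
      rcases List.eq_nil_or_concat t with rfl | ⟨t', g', rfl⟩
      · refine ⟨2, 1, 0, 0, ?_⟩
        simp only [f_append, f_cons, f_nil, of_e, mul_one, one_mul, pow_two, pow_one,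
          pow_zero, mul_assoc]
        rw [A2']; exact B1
      rw [List.concat_eq_append] at hl hy ⊢
      cases g' with
      | y => exact absurd (by simp) hy
      | x =>
        obtain ⟨a, b, c, d, h⟩ := ih t' (by simp at hl ⊢; omega)
          (fun hm => hy (by simp [hm]))
        obtain ⟨c', d', h'⟩ := padR1 h
        refine ⟨a, b + 1, c', d', ?_⟩
        simp only [f_append, f_cons, f_nil, of_x, of_y, of_e, mul_one, one_mul,
          pow_succ', mul_assoc] at h' ⊢
        rw [A2]; exact h'
      | e =>
        rcases List.eq_nil_or_concat t' with rfl | ⟨t'', g'', rfl⟩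
        · refine ⟨1, 2, 0, 0, ?_⟩
          simp only [f_append, f_cons, f_nil, of_e, mul_one, one_mul, pow_two, pow_one,
            pow_zero, mul_assoc]
          rw [A3]; exact B1
        rw [List.concat_eq_append] at hl hy ⊢
        cases g'' with
        | y => exact absurd (by simp) hy
        | x =>
          obtain ⟨a, b, c, d, h⟩ := ih t'' (by simp at hl ⊢; omega)
            (fun hm => hy (by simp [hm]))
          refine ⟨a, b + 1 + 1, c, d, ?_⟩
          simp only [f_append, f_cons, f_nil, of_x, of_y, of_e, mul_one, one_mul,
            pow_succ', mul_assoc] at h ⊢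
          rw [A3, A1]; exact h
        | e =>
          obtain ⟨a, b, c, d, h⟩ := ih (t'' ++ [.e]) (by simp at hl ⊢; omega)
            (fun hm => hy (by simpa using hm))
          refine ⟨a, b, c, d, ?_⟩
          simp only [f_append, f_cons, f_nil, of_x, of_y, of_e, mul_one, one_mul,
            pow_succ', mul_assoc] at h ⊢
          rw [A4]; exact h

lemma mem_split_first {l : List Alpha} (h : Alpha.y ∈ l) :
    ∃ u t, l = u ++ .y :: t ∧ Alpha.y ∉ u := by
  induction l with
  | nil => cases h
  | cons a l ih =>
    by_cases ha : a = Alpha.y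
    · subst ha; exact ⟨[], l, rfl, by simp⟩
    · have hl : Alpha.y ∈ l := by
        rcases List.mem_cons.mp h with h' | h'
        · exact absurd h'.symm ha
        · exact h'
      obtain ⟨u, t, rfl, hu⟩ := ih hl
      refine ⟨a :: u, t, rfl, ?_⟩
      intro hmem
      rcases List.mem_cons.mp hmem with h' | h'
      · exact ha h'.symm
      · exact hu h'

lemma lemB : ∀ n (l : List Alpha), l.length ≤ n →
    ∃ a b c d : ℕ, X ^ a * f l * Y ^ b = Y ^ c * X ^ d := by
  intro n
  induction n with
  | zero =>
    intro l hl
    have : l = [] := List.eq_nil_of_length_eq_zero (Nat.le_zero.mp hl)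
    subst this
    exact ⟨0, 0, 0, 0, by simp⟩
  | succ n ih =>
    intro l hl
    by_cases hy : Alpha.y ∈ l
    · obtain ⟨u, t, rfl, hu⟩ := mem_split_first hy
      rcases List.eq_nil_or_concat u with rfl | ⟨u', g, rfl⟩
      · -- l = y :: t
        obtain ⟨a, b, c, d, h⟩ := ih t (by simp at hl ⊢; omega)
        refine ⟨a + 1, b, c, d, ?_⟩
        simp only [f_append, f_cons, f_nil, of_x, of_y, of_e, mul_one, one_mul,
          List.nil_append, pow_succ, mul_assoc] at h ⊢
        rw [A1]; exact h
      rw [List.concat_eq_append] at hl hu ⊢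
      cases g with
      | y => exact absurd (by simp) hu
      | x =>
        -- l = u' ++ [x] ++ y :: t  →  u' ++ t
        obtain ⟨a, b, c, d, h⟩ := ih (u' ++ t) (by simp at hl ⊢; omega)
        refine ⟨a, b, c, d, ?_⟩
        simp only [f_append, f_cons, f_nil, of_x, of_y, of_e, mul_one, one_mul,
          mul_assoc] at h ⊢
        rw [A1]; exact h
      | e =>
        rcases List.eq_nil_or_concat u' with rfl | ⟨u'', g', rfl⟩
        · -- l = e :: y :: t
          obtain ⟨a, b, c, d, h⟩ := ih (.y :: t) (by simp at hl ⊢; omega)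
          refine ⟨a + 1, b, c, d, ?_⟩
          simp only [f_append, f_cons, f_nil, of_x, of_y, of_e, mul_one, one_mul,
            List.nil_append, pow_succ, mul_assoc] at h ⊢
          rw [A2]; exact h
        rw [List.concat_eq_append] at hl hu ⊢
        cases g' with
        | y => exact absurd (by simp) hu
        | x =>
          -- l = u'' ++ [x,e] ++ y :: t  →  u'' ++ y :: t
          obtain ⟨a, b, c, d, h⟩ := ih (u'' ++ .y :: t) (by simp at hl ⊢; omega)
          refine ⟨a, b, c, d, ?_⟩
          simp only [f_append, f_cons, f_nil, of_x, of_y, of_e, mul_one, one_mul,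
            mul_assoc] at h ⊢
          rw [A2]; exact h
        | e =>
          rcases List.eq_nil_or_concat u'' with rfl | ⟨u''', g'', rfl⟩
          · -- l = e :: e :: y :: t
            obtain ⟨a, b, c, d, h⟩ := ih t (by simp at hl ⊢; omega)
            obtain ⟨c', d', h'⟩ := padL1 h
            refine ⟨a + 1, b, c', d', ?_⟩
            simp only [f_append, f_cons, f_nil, of_x, of_y, of_e, mul_one, one_mul,
              List.nil_append, pow_succ, mul_assoc] at h' ⊢
            rw [A3]; exact h'
          rw [List.concat_eq_append] at hl hu ⊢
          cases g'' with
          | y => exact absurd (by simp) hu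
          | x =>
            -- l = u''' ++ [x,e,e] ++ y :: t  →  u''' ++ x :: t
            obtain ⟨a, b, c, d, h⟩ := ih (u''' ++ .x :: t) (by simp at hl ⊢; omega)
            refine ⟨a, b, c, d, ?_⟩
            simp only [f_append, f_cons, f_nil, of_x, of_y, of_e, mul_one, one_mul,
              mul_assoc] at h ⊢
            rw [A3]; exact h
          | e =>
            -- l = u''' ++ [e,e,e] ++ y :: t  →  u''' ++ e :: y :: t
            obtain ⟨a, b, c, d, h⟩ := ih (u''' ++ .e :: .y :: t) (by simp at hl ⊢; omega)
            refine ⟨a, b, c, d, ?_⟩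
            simp only [f_append, f_cons, f_nil, of_x, of_y, of_e, mul_one, one_mul,
              mul_assoc] at h ⊢
            rw [A4]; exact h
    · exact lemA (n + 1) l hl hy

lemma exists_list (m : M) : ∃ l : List Alpha, f l = m := by
  induction m using PresentedMonoid.inductionOn with
  | h a =>
    induction a using FreeMonoid.inductionOn' with
    | one => exact ⟨[], by simp [map_one]⟩
    | of_mul g w ih =>
      obtain ⟨l, hl⟩ := ih
      exact ⟨g :: l, by rw [f_cons, map_mul, hl]; rfl⟩

lemma J1 (m : M) : ∃ p q : M, p * m * q = 1 := by
  obtain ⟨l, rfl⟩ := exists_list m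
  obtain ⟨a, b, c, d, h⟩ := lemB l.length l le_rfl
  refine ⟨X ^ c * X ^ a, Y ^ b * Y ^ d, ?_⟩
  have h2 : X ^ c * X ^ a * f l * (Y ^ b * Y ^ d) = X ^ c * (X ^ a * f l * Y ^ b) * Y ^ d := by
    simp only [mul_assoc]
  rw [h2, h, ← mul_assoc, XYpow c, one_mul, XYpow d]


/-- `M` is simple, and every element of `M` is `J`-related to `1`. -/
theorem stmt_2 :
    (∀ a b : M, ∃ p q : M, p * a * q = b) ∧
    (∀ a : M, {z : M | ∃ p q : M, p * a * q = z} =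
              {z : M | ∃ p q : M, p * (1 : M) * q = z}) := by
  constructor
  · intro a b
    obtain ⟨p, q, hpq⟩ := J1 a
    exact ⟨p, q * b, by rw [← mul_assoc, hpq, one_mul]⟩
  · intro a
    ext z
    simp only [Set.mem_setOf_eq]
    constructor
    · intro _
      exact ⟨z, 1, by simp⟩
    · intro _
      obtain ⟨p, q, hpq⟩ := J1 a
      exact ⟨p, q * z, by rw [← mul_assoc, hpq, one_mul]⟩
end

section
/- In the monoid M presented by ⟨x, y, e | e³ = e, xey = y, xe²y = x, xy = 1⟩, the element e cannot be written as a product p·q where p is left-invertible and q is right-invertible. -/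
namespace StmtAux

/-- Push the letter `e` onto the front of a normal word, normalizing. -/
def pushE : List Alpha → List Alpha
  | .e :: .e :: s => .e :: s
  | t => .e :: t

/-- Push the letter `x` onto the front of a normal word, normalizing. -/
def pushX (l : List Alpha) : List Alpha :=
  match l with
  | .y :: t => t
  | .e :: .y :: t => .y :: t
  | .e :: .e :: .y :: t => pushX t
  | t => .x :: t
termination_by structural l

/-- Push a letter onto the front of a normal word, normalizing. -/
def push : Alpha → List Alpha → List Alpha
  | .x, t => pushX t
  | .y, t => .y :: t
  | .e, t => pushE t

/-- No forbidden pattern (`eee`, `xy`, `xey`, `xeey`) starts at `a :: t`. -/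
def ok : Alpha → List Alpha → Bool
  | .e, .e :: .e :: _ => false
  | .x, .y :: _ => false
  | .x, .e :: .y :: _ => false
  | .x, .e :: .e :: .y :: _ => false
  | _, _ => true

/-- A word is normal: no forbidden pattern anywhere. -/
def good : List Alpha → Bool
  | [] => true
  | a :: t => ok a t && good t

@[simp] theorem pushX_y (t : List Alpha) : pushX (.y :: t) = t := by simp [pushX]
@[simp] theorem pushX_ey (t : List Alpha) : pushX (.e :: .y :: t) = .y :: t := by simp [pushX]
@[simp] theorem pushX_eey (t : List Alpha) : pushX (.e :: .e :: .y :: t) = pushX t := by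
  simp [pushX]

theorem pushX_default (t : List Alpha) (h1 : ∀ s, t ≠ .y :: s) (h2 : ∀ s, t ≠ .e :: .y :: s)
    (h3 : ∀ s, t ≠ .e :: .e :: .y :: s) : pushX t = .x :: t := by
  rw [pushX.eq_def]
  split
  · exact absurd rfl (h1 _)
  · exact absurd rfl (h2 _)
  · exact absurd rfl (h3 _)
  · rfl

@[simp] theorem pushE_ee (s : List Alpha) : pushE (.e :: .e :: s) = .e :: s := rfl

theorem pushE_default (t : List Alpha) (h : ∀ s, t ≠ .e :: .e :: s) : pushE t = .e :: t := by
  rw [pushE.eq_def]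
  split
  · exact absurd rfl (h _)
  · rfl

theorem pushE_head (t : List Alpha) : ∃ s, pushE t = .e :: s := by
  rw [pushE.eq_def]; split
  · exact ⟨_, rfl⟩
  · exact ⟨_, rfl⟩

@[simp] theorem push_x (t : List Alpha) : push .x t = pushX t := rfl
@[simp] theorem push_y (t : List Alpha) : push .y t = .y :: t := rfl
@[simp] theorem push_e (t : List Alpha) : push .e t = pushE t := rfl

@[simp] theorem good_nil : good ([] : List Alpha) = true := rfl
theorem good_cons_iff (a : Alpha) (t : List Alpha) :
    good (a :: t) = (ok a t && good t) := rfl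

theorem good_cons {a : Alpha} {t : List Alpha} (h : good (a :: t) = true) : good t = true := by
  rw [good_cons_iff] at h; exact (Bool.and_eq_true_iff.mp h).2

theorem ok_of_good {a : Alpha} {t : List Alpha} (h : good (a :: t) = true) : ok a t = true := by
  rw [good_cons_iff] at h; exact (Bool.and_eq_true_iff.mp h).1

@[simp] theorem ok_y (t : List Alpha) : ok .y t = true := rfl

theorem ok_e_default (t : List Alpha) (h : ∀ s, t ≠ .e :: .e :: s) : ok .e t = true := by
  rw [ok.eq_def]
  split <;> first
    | rfl
    | exact absurd rfl (h _)
    | simp_all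

theorem ok_x_default (t : List Alpha) (h1 : ∀ s, t ≠ .y :: s) (h2 : ∀ s, t ≠ .e :: .y :: s)
    (h3 : ∀ s, t ≠ .e :: .e :: .y :: s) : ok .x t = true := by
  rw [ok.eq_def]
  split <;> first
    | rfl
    | exact absurd rfl (h1 _)
    | exact absurd rfl (h2 _)
    | exact absurd rfl (h3 _)
    | simp_all

/-- `push` never deletes an `x` present in the word. -/
theorem mem_pushX {t : List Alpha} (h : Alpha.x ∈ t) : Alpha.x ∈ pushX t := by
  induction t using pushX.induct with
  | case1 t => simp_all [pushX]
  | case2 t => simp_all [pushX]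
  | case3 t ih => simp_all [pushX]
  | case4 t h1 h2 h3 =>
      rw [pushX_default t h1 h2 h3]
      exact List.mem_cons_of_mem _ h

theorem mem_pushE {t : List Alpha} (h : Alpha.x ∈ t) : Alpha.x ∈ pushE t := by
  rw [pushE.eq_def]
  split
  · simp_all
  · exact List.mem_cons_of_mem _ h

theorem mem_push {t : List Alpha} (a : Alpha) (h : Alpha.x ∈ t) : Alpha.x ∈ push a t := by
  cases a
  · exact mem_pushX h
  · exact List.mem_cons_of_mem _ h
  · exact mem_pushE h

theorem foldr_mem (w : List Alpha) {t : List Alpha} (h : Alpha.x ∈ t) :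
    Alpha.x ∈ List.foldr push t w := by
  induction w with
  | nil => exact h
  | cons a w ih => exact mem_push a ih

/-- `push` preserves the property of ending with the letter `e`. -/
theorem endsE_pushX (u : List Alpha) : ∃ v, pushX (u ++ [.e]) = v ++ [.e] := by
  induction u using pushX.induct with
  | case1 t => exact ⟨t, by simp⟩
  | case2 t => exact ⟨.y :: t, by simp⟩
  | case3 t ih => simpa using ih
  | case4 t h1 h2 h3 =>
      rcases t with _ | ⟨a, t⟩
      · exact ⟨[.x], by simp [pushX]⟩
      rcases a with _ | _ | _
      · refine ⟨.x :: .x :: t, ?_⟩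
        rw [pushX_default] <;> simp
      · exact absurd rfl (h1 _)
      · rcases t with _ | ⟨b, t⟩
        · exact ⟨[.x, .e], by simp [pushX]⟩
        rcases b with _ | _ | _
        · refine ⟨.x :: .e :: .x :: t, ?_⟩
          rw [pushX_default] <;> simp
        · exact absurd rfl (h2 _)
        · rcases t with _ | ⟨c, t⟩
          · exact ⟨[.x, .e, .e], by simp [pushX]⟩
          rcases c with _ | _ | _
          · refine ⟨.x :: .e :: .e :: .x :: t, ?_⟩
            rw [pushX_default] <;> simp
          · exact absurd rfl (h3 _)
          · refine ⟨.x :: .e :: .e :: .e :: t, ?_⟩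
            rw [pushX_default] <;> simp

theorem endsE_pushE (u : List Alpha) : ∃ v, pushE (u ++ [.e]) = v ++ [.e] := by
  rcases u with _ | ⟨a, u⟩
  · exact ⟨[.e], rfl⟩
  rcases a with _ | _ | _
  · exact ⟨.e :: .x :: u, by rw [pushE_default] <;> simp⟩
  · exact ⟨.e :: .y :: u, by rw [pushE_default] <;> simp⟩
  · rcases u with _ | ⟨b, u⟩
    · exact ⟨[], by simp⟩
    rcases b with _ | _ | _
    · exact ⟨.e :: .e :: .x :: u, by rw [pushE_default] <;> simp⟩
    · exact ⟨.e :: .e :: .y :: u, by rw [pushE_default] <;> simp⟩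
    · exact ⟨.e :: u, by simp⟩

theorem endsE_push (a : Alpha) (u : List Alpha) : ∃ v, push a (u ++ [.e]) = v ++ [.e] := by
  cases a
  · exact endsE_pushX u
  · exact ⟨.y :: u, rfl⟩
  · exact endsE_pushE u

theorem endsE_foldr (w u : List Alpha) : ∃ v, List.foldr push (u ++ [.e]) w = v ++ [.e] := by
  induction w with
  | nil => exact ⟨u, rfl⟩
  | cons a w ih =>
      obtain ⟨v, hv⟩ := ih
      rw [List.foldr_cons, hv]
      exact endsE_push a v

/-- `push` preserves normality. -/
theorem good_pushE {t : List Alpha} (h : good t = true) : good (pushE t) = true := by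
  rw [pushE.eq_def]
  split
  · exact good_cons h
  · rename_i hne
    rw [good_cons_iff, ok_e_default _ hne, h, Bool.and_self]

theorem good_pushX {t : List Alpha} (h : good t = true) : good (pushX t) = true := by
  induction t using pushX.induct with
  | case1 t => exact good_cons h
  | case2 t => exact good_cons h
  | case3 t ih => rw [pushX_eey]; exact ih (good_cons (good_cons (good_cons h)))
  | case4 t h1 h2 h3 =>
      rw [pushX_default t h1 h2 h3, good_cons_iff, ok_x_default t h1 h2 h3, h, Bool.and_self]

theorem good_push (a : Alpha) {t : List Alpha} (h : good t = true) : good (push a t) = true := by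
  cases a
  · exact good_pushX h
  · rw [push_y, good_cons_iff, ok_y, h, Bool.and_self]
  · exact good_pushE h

theorem good_foldr (w : List Alpha) {t : List Alpha} (h : good t = true) :
    good (List.foldr push t w) = true := by
  induction w with
  | nil => exact h
  | cons a w ih => exact good_push a ih

/-- Pushing onto a word where no forbidden pattern starts is just `cons`. -/
theorem push_ok {a : Alpha} {t : List Alpha} (h : ok a t = true) : push a t = a :: t := by
  cases a
  · rw [push_x]
    apply pushX_default <;> intro s hs <;> subst hs <;> simp [ok] at h
  · rfl
  · rw [push_e]
    apply pushE_default
    intro s hs; subst hs; simp [ok] at h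

/-- If a good word `u` contains no `x` and `t` is good starting with `x`,
then `u ++ t` is good. -/
theorem good_append {t : List Alpha} {t' : List Alpha} (htx : t = .x :: t')
    (ht : good t = true) :
    ∀ u, good u = true → Alpha.x ∉ u → good (u ++ t) = true := by
  intro u
  induction u with
  | nil => intro _ _; simpa using ht
  | cons a u ih =>
      intro hu hxu
      have hx_tail : Alpha.x ∉ u := fun hm => hxu (List.mem_cons_of_mem _ hm)
      have hgt : good (u ++ t) = true := ih (good_cons hu) hx_tail
      rw [List.cons_append, good_cons_iff, hgt, Bool.and_true]
      have ha : a ≠ Alpha.x := fun hax => hxu (hax ▸ (List.mem_cons_self : a ∈ a :: u))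
      cases a
      · exact absurd rfl ha
      · exact ok_y _
      · apply ok_e_default
        intro s hs
        rcases u with _ | ⟨b, u⟩
        · rw [List.nil_append, htx] at hs; cases hs
        · rcases u with _ | ⟨c, u⟩
          · rw [List.cons_append, List.nil_append, htx] at hs
            injection hs with hb hs'
            subst hb
            injection hs' with hc
            cases hc
          · rw [List.cons_append, List.cons_append] at hs
            injection hs with hb hs'
            injection hs' with hc
            subst hb hc
            simp [good_cons_iff, ok] at hu

theorem foldr_eq_append : ∀ u t : List Alpha, good (u ++ t) = true →
    List.foldr push t u = u ++ t := by
  intro u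
  induction u with
  | nil => intro t _; rfl
  | cons a u ih =>
      intro t h
      rw [List.cons_append] at h
      rw [List.foldr_cons, ih t (good_cons h), push_ok (ok_of_good h), List.cons_append]

/-- The subtype of normal words. -/
def S : Type := {l : List Alpha // good l = true}

/-- The action of a letter on normal words. -/
def pushS (a : Alpha) : Function.End S := fun s => ⟨push a s.1, good_push a s.2⟩

theorem hrel : ∀ a b : FreeMonoid Alpha, rel a b →
    FreeMonoid.lift pushS a = FreeMonoid.lift pushS b := by
  rintro a b (⟨ha, hb⟩ | ⟨ha, hb⟩ | ⟨ha, hb⟩ | ⟨ha, hb⟩) <;> subst ha hb <;>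
    refine funext fun s => Subtype.ext ?_ <;>
    simp only [map_mul, map_one, FreeMonoid.lift_eval_of, Function.End.mul_def,
      Function.comp_apply, Function.End.one_def, id_eq]
  -- e³ = e
  · show push .e (push .e (push .e s.1)) = push .e s.1
    obtain ⟨t, ht⟩ := s
    rcases t with _ | ⟨a, t⟩
    · rfl
    rcases a with _ | _ | _
    · rfl
    · rfl
    · rcases t with _ | ⟨b, t⟩
      · rfl
      rcases b with _ | _ | _
      · rfl
      · rfl
      · -- t = e :: e :: t; goodness forbids a third e
        rcases t with _ | ⟨c, t⟩
        · rfl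
        rcases c with _ | _ | _
        · rfl
        · rfl
        · simp [good_cons_iff, ok] at ht
  -- xey = y
  · show push .x (push .e (push .y s.1)) = push .y s.1
    simp [pushE_default]
  -- xe²y = x
  · show push .x (push .e (push .e (push .y s.1))) = push .x s.1
    rcases s with ⟨t, ht⟩
    show pushX (pushE (pushE (.y :: t))) = pushX t
    rw [pushE_default (.y :: t) (by simp), pushE_default (.e :: .y :: t) (by simp), pushX_eey]
  -- xy = 1
  · show push .x (push .y s.1) = s.1
    simp

/-- The homomorphism from `M` to the monoid of endomorphisms of normal words. -/
noncomputable def Φ : M →* Function.End S := PresentedMonoid.lift pushS hrel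

theorem Phi_mk_val (w : List Alpha) (s : S) :
    (Φ (PresentedMonoid.mk rel (FreeMonoid.ofList w)) s).1 = List.foldr push s.1 w := by
  induction w with
  | nil =>
      show (Φ 1 s).1 = s.1
      rw [map_one]
      rfl
  | cons a w ih =>
      rw [FreeMonoid.ofList_cons, map_mul, map_mul]
      show ((Φ (PresentedMonoid.of rel a) * Φ (PresentedMonoid.mk rel (FreeMonoid.ofList w))) s).1
        = _
      change ((Φ (PresentedMonoid.of rel a)) (Φ (PresentedMonoid.mk rel (FreeMonoid.ofList w)) s)).1 = _
      have : Φ (PresentedMonoid.of rel a) = pushS a := PresentedMonoid.lift_of pushS hrel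
      rw [this]
      show push a ((Φ (PresentedMonoid.mk rel (FreeMonoid.ofList w)) s).1) = _
      rw [ih, List.foldr_cons]

theorem mk_eee : PresentedMonoid.mk rel (FreeMonoid.ofList [.e, .e, .e])
    = PresentedMonoid.mk rel (FreeMonoid.ofList [.e]) :=
  Quotient.sound (ConGen.Rel.of _ _ (Or.inl ⟨rfl, rfl⟩))

theorem mk_xey : PresentedMonoid.mk rel (FreeMonoid.ofList [.x, .e, .y])
    = PresentedMonoid.mk rel (FreeMonoid.ofList [.y]) :=
  Quotient.sound (ConGen.Rel.of _ _ (Or.inr (Or.inl ⟨rfl, rfl⟩)))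

theorem mk_xeey : PresentedMonoid.mk rel (FreeMonoid.ofList [.x, .e, .e, .y])
    = PresentedMonoid.mk rel (FreeMonoid.ofList [.x]) :=
  Quotient.sound (ConGen.Rel.of _ _ (Or.inr (Or.inr (Or.inl ⟨rfl, rfl⟩))))

theorem mk_xy : PresentedMonoid.mk rel (FreeMonoid.ofList [.x, .y])
    = PresentedMonoid.mk rel (FreeMonoid.ofList []) :=
  Quotient.sound (ConGen.Rel.of _ _ (Or.inr (Or.inr (Or.inr ⟨rfl, rfl⟩))))

theorem mk_append (u v : List Alpha) :
    PresentedMonoid.mk rel (FreeMonoid.ofList (u ++ v))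
      = PresentedMonoid.mk rel (FreeMonoid.ofList u)
        * PresentedMonoid.mk rel (FreeMonoid.ofList v) := by
  rw [← map_mul]
  rfl

theorem mk_x : ∀ t : List Alpha, PresentedMonoid.mk rel (FreeMonoid.ofList (.x :: t))
    = PresentedMonoid.mk rel (FreeMonoid.ofList (pushX t)) := by
  intro t
  induction t using pushX.induct with
  | case1 t =>
      rw [pushX_y]
      have : (Alpha.x :: .y :: t) = [Alpha.x, .y] ++ t := rfl
      rw [this, mk_append, mk_xy]
      have : PresentedMonoid.mk rel (FreeMonoid.ofList []) = 1 := rfl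
      rw [this, one_mul]
  | case2 t =>
      rw [pushX_ey]
      have h1 : (Alpha.x :: .e :: .y :: t) = [Alpha.x, .e, .y] ++ t := rfl
      have h2 : (Alpha.y :: t) = [Alpha.y] ++ t := rfl
      rw [h1, h2, mk_append, mk_append, mk_xey]
  | case3 t ih =>
      rw [pushX_eey, ← ih]
      have h1 : (Alpha.x :: .e :: .e :: .y :: t) = [Alpha.x, .e, .e, .y] ++ t := rfl
      have h2 : (Alpha.x :: t) = [Alpha.x] ++ t := rfl
      rw [h1, h2, mk_append, mk_append, mk_xeey]
  | case4 t h1 h2 h3 =>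
      rw [pushX_default t h1 h2 h3]

theorem mk_push : ∀ (a : Alpha) (t : List Alpha),
    PresentedMonoid.mk rel (FreeMonoid.ofList (a :: t))
      = PresentedMonoid.mk rel (FreeMonoid.ofList (push a t)) := by
  intro a t
  cases a
  · exact mk_x t
  · rfl
  · rcases t with _ | ⟨b, t⟩
    · rfl
    rcases b with _ | _ | _
    · rfl
    · rfl
    · rcases t with _ | ⟨c, t⟩
      · rfl
      rcases c with _ | _ | _
      · rfl
      · rfl
      · -- e :: e :: e :: t
        rw [push_e, pushE_ee]
        have h1 : (Alpha.e :: .e :: .e :: t) = [Alpha.e, .e, .e] ++ t := rfl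
        have h2 : (Alpha.e :: t) = [Alpha.e] ++ t := rfl
        rw [h1, h2, mk_append, mk_append, mk_eee]

theorem mk_norm : ∀ w : List Alpha, PresentedMonoid.mk rel (FreeMonoid.ofList w)
    = PresentedMonoid.mk rel (FreeMonoid.ofList (List.foldr push [] w)) := by
  intro w
  induction w with
  | nil => rfl
  | cons a w ih =>
      rw [List.foldr_cons, ← mk_push]
      have h1 : (a :: w) = [a] ++ w := rfl
      have h2 : (a :: List.foldr push [] w) = [a] ++ List.foldr push [] w := rfl
      rw [h1, h2, mk_append, mk_append, ih]

def s0 : S := ⟨[], rfl⟩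

end StmtAux

open StmtAux in
/-- In `M`, the element `e` is not a product of a left-invertible element by a
right-invertible element. -/
theorem stmt_4 :
    ¬ ∃ p q : M, (∃ p' : M, p' * p = 1) ∧ (∃ q' : M, q * q' = 1) ∧ p * q = E := by
  rintro ⟨p, q, ⟨p', hp⟩, ⟨q', hq⟩, hpq⟩
  -- representative words
  obtain ⟨wp, rfl⟩ := PresentedMonoid.surjective_mk p
  obtain ⟨wq, rfl⟩ := PresentedMonoid.surjective_mk q
  obtain ⟨wp', rfl⟩ := PresentedMonoid.surjective_mk p'
  obtain ⟨wq', rfl⟩ := PresentedMonoid.surjective_mk q'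
  set lp : List Alpha := FreeMonoid.toList wp with hlp
  set lq : List Alpha := FreeMonoid.toList wq with hlq
  set lp' : List Alpha := FreeMonoid.toList wp' with hlp'
  set lq' : List Alpha := FreeMonoid.toList wq' with hlq'
  have ewp : wp = FreeMonoid.ofList lp := rfl
  have ewq : wq = FreeMonoid.ofList lq := rfl
  have ewp' : wp' = FreeMonoid.ofList lp' := rfl
  have ewq' : wq' = FreeMonoid.ofList lq' := rfl
  -- normal forms
  set tp : List Alpha := List.foldr push [] lp with htp
  set tq : List Alpha := List.foldr push [] lq with htq
  have hgood_tp : good tp = true := good_foldr lp good_nil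
  have hgood_tq : good tq = true := good_foldr lq good_nil
  -- homomorphism equations
  have hPp : Φ (PresentedMonoid.mk rel wp') * Φ (PresentedMonoid.mk rel wp) = 1 := by
    rw [← map_mul, hp, map_one]
  have hPq : Φ (PresentedMonoid.mk rel wq) * Φ (PresentedMonoid.mk rel wq') = 1 := by
    rw [← map_mul, hq, map_one]
  have hPpq : Φ (PresentedMonoid.mk rel wp) * Φ (PresentedMonoid.mk rel wq) = Φ E := by
    rw [← map_mul, hpq]
  -- values at s0
  have hTq : (Φ (PresentedMonoid.mk rel wq) s0).1 = tq := by
    rw [ewq]; exact Phi_mk_val lq s0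
  have hTp : (Φ (PresentedMonoid.mk rel wp) s0).1 = tp := by
    rw [ewp]; exact Phi_mk_val lp s0
  have hE0 : (Φ E s0).1 = [.e] := by
    have : Φ E = pushS .e := PresentedMonoid.lift_of pushS hrel
    rw [this]; rfl
  -- q * q' = 1 at s0 : tq = [] or tq starts with x
  have hq0 : (Φ (PresentedMonoid.mk rel wq) (Φ (PresentedMonoid.mk rel wq') s0)).1 = [] := by
    have : Φ (PresentedMonoid.mk rel wq) (Φ (PresentedMonoid.mk rel wq') s0)
        = (Φ (PresentedMonoid.mk rel wq) * Φ (PresentedMonoid.mk rel wq')) s0 := rfl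
    rw [this, hPq]; rfl
  have hq1 : List.foldr push (Φ (PresentedMonoid.mk rel wq') s0).1 tq = [] := by
    rw [← hq0, ewq, mk_norm lq, ← htq, Phi_mk_val]
  -- p' * p = 1 at s0
  have hp0 : (Φ (PresentedMonoid.mk rel wp') (Φ (PresentedMonoid.mk rel wp) s0)).1 = [] := by
    have : Φ (PresentedMonoid.mk rel wp') (Φ (PresentedMonoid.mk rel wp) s0)
        = (Φ (PresentedMonoid.mk rel wp') * Φ (PresentedMonoid.mk rel wp)) s0 := rfl
    rw [this, hPp]; rfl
  have hp1 : List.foldr push tp lp' = [] := by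
    have := Phi_mk_val lp' (Φ (PresentedMonoid.mk rel wp) s0)
    rw [hTp] at this
    rw [← this, ← ewp', hp0]
  -- p * q = E at s0
  have hpq1 : List.foldr push tq tp = [.e] := by
    have h1 : Φ (PresentedMonoid.mk rel wp) (Φ (PresentedMonoid.mk rel wq) s0)
        = (Φ (PresentedMonoid.mk rel wp) * Φ (PresentedMonoid.mk rel wq)) s0 := rfl
    have h2 := congrArg (fun f => (f s0).1) hPpq
    have h3 : (Φ (PresentedMonoid.mk rel wp) (Φ (PresentedMonoid.mk rel wq) s0)).1 = [.e] := by
      rw [h1]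
      rw [show ((Φ (PresentedMonoid.mk rel wp) * Φ (PresentedMonoid.mk rel wq)) s0).1
          = (Φ E s0).1 from h2, hE0]
    have h4 := Phi_mk_val tp (Φ (PresentedMonoid.mk rel wq) s0)
    rw [hTq] at h4
    rw [← h4]
    rw [show PresentedMonoid.mk rel (FreeMonoid.ofList tp) = PresentedMonoid.mk rel wp by
      rw [ewp, mk_norm lp, ← htp]]
    exact h3
  -- x does not occur in tp
  have hxtp : Alpha.x ∉ tp := by
    intro hx
    have := foldr_mem lp' hx
    rw [hp1] at this
    cases this
  -- case analysis on tq
  rcases htq' : tq with _ | ⟨a, t''⟩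
  · -- tq = [] : then tp = [e], contradicting p left-invertible
    rw [htq'] at hpq1
    have h5 : List.foldr push [] tp = tp := by
      have := foldr_eq_append tp [] (by simpa using hgood_tp)
      simpa using this
    have : tp = [.e] := by rw [← h5, hpq1]
    rw [this] at hp1
    obtain ⟨v, hv⟩ := endsE_foldr lp' []
    rw [show ([] : List Alpha) ++ [.e] = [.e] from rfl] at hv
    rw [hv] at hp1
    simp at hp1
  · -- tq = a :: t''
    have ha : a = Alpha.x := by
      rw [htq'] at hq1
      rw [List.foldr_cons] at hq1
      cases a
      · rfl
      · simp at hq1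
      · obtain ⟨s, hs⟩ := pushE_head (List.foldr push (Φ (PresentedMonoid.mk rel wq') s0).1 t'')
        rw [push_e, hs] at hq1
        cases hq1
    subst ha
    have hcat : good (tp ++ tq) = true := by
      rw [htq']
      exact good_append rfl (htq' ▸ hgood_tq) tp hgood_tp hxtp
    have : tp ++ tq = [.e] := by
      rw [← foldr_eq_append tp tq (htq' ▸ hcat), hpq1]
    rcases tp with _ | ⟨b, u⟩
    · rw [List.nil_append, htq'] at this
      injection this with h1 _
      cases h1
    · rw [List.cons_append] at this
      injection this with h1 h2
      rw [htq'] at h2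
      rcases List.append_eq_nil_iff.mp h2 with ⟨_, h4⟩
      cases h4
end

section
/- The string rewriting system with rules e³ → e, xey → y, xe²y → x, xy → 1 over the alphabet A = {x, y, e} is confluent: if a word w ∈ A* rewrites (in zero or more steps) to both w₁ and w₂, then there exists a word w' such that both w₁ and w₂ rewrite (in zero or more steps) to w'. -/
/-- The one-step rewriting relation on the free monoid `A*`:
`u·ℓ·v → u·r·v` for each rule `(ℓ, r)`. -/
def Step : FreeMonoid Alpha → FreeMonoid Alpha → Prop := fun a b =>
  ∃ u v l r : FreeMonoid Alpha, rel l r ∧ a = u * l * v ∧ b = u * r * v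

namespace Conf

open Alpha

/-- Insert a letter in front of a word, reducing. -/
def ins : Alpha → List Alpha → List Alpha
  | .e, .e :: .e :: t => .e :: t
  | .e, t => .e :: t
  | .x, .e :: .y :: t => .y :: t
  | .x, .e :: .e :: .y :: t => ins .x t
  | .x, .y :: t => t
  | .x, t => .x :: t
  | .y, t => .y :: t

/-- Normal form. -/
def nf (w : List Alpha) : List Alpha := w.foldr ins []

/-- No `eee` substring. -/
def ok : List Alpha → Prop
  | .e :: .e :: .e :: _ => False
  | _ :: t => ok t
  | [] => True

lemma ins_e_eq (t : List Alpha) (h : ∀ t', t ≠ .e :: .e :: t') : ins .e t = .e :: t := by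
  rw [ins.eq_def]; split <;> simp_all

lemma ins_x_eq (t : List Alpha) (h1 : ∀ t', t ≠ .e :: .y :: t')
    (h2 : ∀ t', t ≠ .e :: .e :: .y :: t') (h3 : ∀ t', t ≠ .y :: t') :
    ins .x t = .x :: t := by
  rw [ins.eq_def]; split <;> simp_all

lemma ok_ee {t : List Alpha} (h : ok (.e :: .e :: t)) : ok (.e :: t) := by
  match t with
  | [] => trivial
  | .e :: t' => simp_all [ok]
  | .x :: t' => simpa [ok] using h
  | .y :: t' => simpa [ok] using h

lemma ok_cons_e {t : List Alpha} (h : ok t) (hne : ∀ t', t ≠ .e :: .e :: t') :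
    ok (.e :: t) := by
  match t with
  | [] => trivial
  | .x :: t' => simpa [ok] using h
  | .y :: t' => simpa [ok] using h
  | .e :: [] => trivial
  | .e :: .x :: t' => simpa [ok] using h
  | .e :: .y :: t' => simpa [ok] using h
  | .e :: .e :: t' => exact absurd rfl (hne t')

lemma ok_ins (c : Alpha) (t : List Alpha) (h : ok t) : ok (ins c t) := by
  induction c, t using ins.induct with
  | case1 t => exact ok_ee h
  | case2 t hne => rw [ins_e_eq t (fun t' ht => hne t' ht)]; exact ok_cons_e h (fun t' ht => hne t' ht)
  | case3 t => simpa [ins, ok] using h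
  | case4 t ih => simp only [ins]; exact ih (by simpa [ok] using h)
  | case5 t => simpa [ins, ok] using h
  | case6 t h1 h2 h3 =>
    rw [ins_x_eq t (fun t' ht => h1 t' ht) (fun t' ht => h2 t' ht) (fun t' ht => h3 t' ht)]
    match t with
    | [] => trivial
    | _ :: _ => simpa [ok] using h
  | case7 t => simpa [ins, ok] using h

lemma ok_nf (w : List Alpha) : ok (nf w) := by
  induction w with
  | nil => trivial
  | cons a w ih => exact ok_ins a _ ih

lemma ins_e3 (t : List Alpha) (h : ok t) :
    ins .e (ins .e (ins .e t)) = ins .e t := by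
  match t with
  | .e :: .e :: .e :: t' => exact absurd h (by simp [ok])
  | .e :: .e :: .x :: t' => simp [ins]
  | .e :: .e :: .y :: t' => simp [ins]
  | .e :: .e :: [] => simp [ins]
  | .e :: .x :: t' => simp [ins]
  | .e :: .y :: t' => simp [ins]
  | .e :: [] => simp [ins]
  | .x :: t' => simp [ins]
  | .y :: t' => simp [ins]
  | [] => simp [ins]

lemma ins_xey (t : List Alpha) : ins .x (ins .e (ins .y t)) = ins .y t := by simp [ins]

lemma ins_xeey (t : List Alpha) :
    ins .x (ins .e (ins .e (ins .y t))) = ins .x t := by simp [ins]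

lemma ins_xy (t : List Alpha) : ins .x (ins .y t) = t := by simp [ins]

lemma nf_append (u s : List Alpha) :
    nf (u ++ s) = u.foldr ins (nf s) := List.foldr_append ..

/-- One step preserves the normal form. -/
lemma nf_step {a b : FreeMonoid Alpha} (h : Step a b) :
    nf a.toList = nf b.toList := by
  obtain ⟨u, v, l, r, hrel, ha, hb⟩ := h
  subst ha hb
  have key : nf (l.toList ++ v.toList) = nf (r.toList ++ v.toList) := by
    rcases hrel with ⟨hl, hr⟩ | ⟨hl, hr⟩ | ⟨hl, hr⟩ | ⟨hl, hr⟩ <;> subst hl hr <;>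
      simp only [FreeMonoid.toList_mul, FreeMonoid.toList_of, FreeMonoid.toList_one,
        List.append_assoc, List.cons_append, List.nil_append, nf_append, List.foldr_cons,
        List.foldr_nil]
    · exact ins_e3 _ (ok_nf _)
    · exact ins_xey _
    · exact ins_xeey _
    · exact ins_xy _
  show nf ((u.toList ++ l.toList) ++ v.toList) = nf ((u.toList ++ r.toList) ++ v.toList)
  rw [List.append_assoc, nf_append, key, ← nf_append, ← List.append_assoc]

open Relation

lemma step_mul_left (u : FreeMonoid Alpha) {a b : FreeMonoid Alpha} (h : Step a b) :
    Step (u * a) (u * b) := by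
  obtain ⟨u', v, l, r, hrel, ha, hb⟩ := h
  exact ⟨u * u', v, l, r, hrel, by rw [ha]; simp [mul_assoc],
    by rw [hb]; simp [mul_assoc]⟩

lemma rtg_mul_left (u : FreeMonoid Alpha) {a b : FreeMonoid Alpha}
    (h : ReflTransGen Step a b) : ReflTransGen Step (u * a) (u * b) :=
  ReflTransGen.lift (u * ·) (fun _ _ => step_mul_left u) _ _ h

/-- cons reaches its ins. -/
lemma reach_ins (c : Alpha) (t : List Alpha) :
    ReflTransGen Step (FreeMonoid.ofList (c :: t)) (FreeMonoid.ofList (ins c t)) := by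
  induction c, t using ins.induct with
  | case1 t => -- e, e::e::t
    exact ReflTransGen.single ⟨1, FreeMonoid.ofList t, _, _, Or.inl ⟨rfl, rfl⟩, rfl, rfl⟩
  | case2 t h => rw [ins_e_eq t (fun t' ht => h t' ht)]
  | case3 t => -- x, e::y::t
    exact ReflTransGen.single ⟨1, FreeMonoid.ofList t, _, _, Or.inr (Or.inl ⟨rfl, rfl⟩), rfl, rfl⟩
  | case4 t ih => -- x, e::e::y::t
    exact ReflTransGen.head
      ⟨1, FreeMonoid.ofList t, _, _, Or.inr (Or.inr (Or.inl ⟨rfl, rfl⟩)), rfl, rfl⟩ ih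
  | case5 t => -- x, y::t
    exact ReflTransGen.single
      ⟨1, FreeMonoid.ofList t, _, _, Or.inr (Or.inr (Or.inr ⟨rfl, rfl⟩)), rfl, rfl⟩
  | case6 t h1 h2 h3 =>
    rw [ins_x_eq t (fun t' ht => h1 t' ht) (fun t' ht => h2 t' ht) (fun t' ht => h3 t' ht)]
  | case7 t => rw [show ins Alpha.y t = .y :: t by simp [ins]]

lemma reach_nf (w : List Alpha) :
    ReflTransGen Step (FreeMonoid.ofList w) (FreeMonoid.ofList (nf w)) := by
  induction w with
  | nil => exact ReflTransGen.refl
  | cons a w ih =>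
    have h1 : ReflTransGen Step (FreeMonoid.ofList (a :: w))
        (FreeMonoid.ofList (a :: nf w)) := by
      rw [FreeMonoid.ofList_cons, FreeMonoid.ofList_cons]
      exact rtg_mul_left _ ih
    exact h1.trans (reach_ins a (nf w))

lemma nf_rtg {a b : FreeMonoid Alpha} (h : ReflTransGen Step a b) :
    nf a.toList = nf b.toList := by
  induction h with
  | refl => rfl
  | tail _ hs ih => exact ih.trans (nf_step hs)

end Conf

/-- The rewriting system is confluent. -/
theorem stmt_6 :
    ∀ w w₁ w₂ : FreeMonoid Alpha,
      Relation.ReflTransGen Step w w₁ → Relation.ReflTransGen Step w w₂ →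
      ∃ w' : FreeMonoid Alpha,
        Relation.ReflTransGen Step w₁ w' ∧ Relation.ReflTransGen Step w₂ w' := by
  intro w w₁ w₂ h1 h2
  refine ⟨FreeMonoid.ofList (Conf.nf w.toList), ?_, ?_⟩
  · rw [show Conf.nf w.toList = Conf.nf w₁.toList from Conf.nf_rtg h1]
    exact (FreeMonoid.ofList_toList w₁) ▸ Conf.reach_nf w₁.toList
  · rw [show Conf.nf w.toList = Conf.nf w₂.toList from Conf.nf_rtg h2]
    exact (FreeMonoid.ofList_toList w₂) ▸ Conf.reach_nf w₂.toList
end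

section
/- A word w over the alphabet A = {x, y, e} is irreducible with respect to the rewriting system e³ → e, xey → y, xe²y → x, xy → 1 (i.e., no rewrite rule applies to any factor of w) if and only if w belongs to the language {e, y}*{e, x}* − A*e³A*, that is, w is a word in {e, y}* followed by a word in {e, x}*, and w contains no factor e³. -/
open Alpha in
/-- `Bad l` : the list contains one of the four left-hand sides as a factor. -/
def Bad (w : List Alpha) : Prop :=
  ∃ p q : List Alpha,
    w = p ++ [e, e, e] ++ q ∨ w = p ++ [x, e, y] ++ q ∨
    w = p ++ [x, e, e, y] ++ q ∨ w = p ++ [x, y] ++ q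

lemma freemonoid_eq_iff (w : FreeMonoid Alpha) (l : List Alpha) :
    w = FreeMonoid.ofList l ↔ w.toList = l := Iff.rfl

lemma step_iff_bad (w : FreeMonoid Alpha) :
    (∃ w', Step w w') ↔ Bad w.toList := by
  constructor
  · rintro ⟨w', u, v, l, r, hrel, ha, -⟩
    refine ⟨u.toList, v.toList, ?_⟩
    rcases hrel with ⟨hl, -⟩ | ⟨hl, -⟩ | ⟨hl, -⟩ | ⟨hl, -⟩ <;> subst hl <;> subst ha <;>
      simp [FreeMonoid.toList_mul, FreeMonoid.toList_of]
  · rintro ⟨p, q, h | h | h | h⟩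
    · exact ⟨_, FreeMonoid.ofList p, FreeMonoid.ofList q, _, _, Or.inl ⟨rfl, rfl⟩,
        by simpa [mul_assoc, FreeMonoid.ofList_append, FreeMonoid.ofList_cons, FreeMonoid.ofList_singleton] using congrArg FreeMonoid.ofList h, rfl⟩
    · exact ⟨_, FreeMonoid.ofList p, FreeMonoid.ofList q, _, _, Or.inr (Or.inl ⟨rfl, rfl⟩),
        by simpa [mul_assoc, FreeMonoid.ofList_append, FreeMonoid.ofList_cons, FreeMonoid.ofList_singleton] using congrArg FreeMonoid.ofList h, rfl⟩
    · exact ⟨_, FreeMonoid.ofList p, FreeMonoid.ofList q, _, _, Or.inr (Or.inr (Or.inl ⟨rfl, rfl⟩)),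
        by simpa [mul_assoc, FreeMonoid.ofList_append, FreeMonoid.ofList_cons, FreeMonoid.ofList_singleton] using congrArg FreeMonoid.ofList h, rfl⟩
    · exact ⟨_, FreeMonoid.ofList p, FreeMonoid.ofList q, _, _, Or.inr (Or.inr (Or.inr ⟨rfl, rfl⟩)),
        by simpa [mul_assoc, FreeMonoid.ofList_append, FreeMonoid.ofList_cons, FreeMonoid.ofList_singleton] using congrArg FreeMonoid.ofList h, rfl⟩

open Alpha in
lemma first_y {l : List Alpha} (h : y ∈ l) : ∃ s t, l = s ++ y :: t ∧ y ∉ s := by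
  induction l with
  | nil => simp at h
  | cons a l ih =>
    by_cases ha : a = y
    · exact ⟨[], l, by simp [ha], by simp⟩
    · rcases ih (by rcases List.mem_cons.1 h with h | h; exacts [absurd h.symm ha, h])
        with ⟨s, t, hst, hs⟩
      refine ⟨a :: s, t, by simp [hst], by simp [hs]; exact fun h => ha h.symm⟩

open Alpha in
lemma bad_cons {a : Alpha} {l : List Alpha} (h : Bad l) : Bad (a :: l) := by
  obtain ⟨p, q, h⟩ := h
  exact ⟨a :: p, q, by rcases h with h | h | h | h <;> simp [h]⟩

open Alpha in
lemma split_of_not_bad : ∀ w : List Alpha, ¬ Bad w →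
    ∃ u v, w = u ++ v ∧ (∀ a ∈ u, a = e ∨ a = y) ∧ (∀ a ∈ v, a = e ∨ a = x) := by
  intro w
  induction w with
  | nil => exact fun _ => ⟨[], [], by simp⟩
  | cons a t ih =>
    intro hw
    obtain ⟨u, v, huv, hu, hv⟩ := ih (fun h => hw (bad_cons h))
    match a with
    | e => exact ⟨e :: u, v, by simp [huv], by simpa using hu, hv⟩
    | y => exact ⟨y :: u, v, by simp [huv], by simpa using hu, hv⟩
    | x =>
      by_cases hy : y ∈ u
      · obtain ⟨s, t', hst, hs⟩ := first_y hy
        have hse : ∀ b ∈ s, b = e := by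
          intro b hb
          rcases hu b (hst ▸ List.mem_append_left _ hb) with h | h
          · exact h
          · exact absurd (h ▸ hb) hs
        exfalso
        apply hw
        match s, hse with
        | [], _ => exact ⟨[], t' ++ v, by simp [huv, hst]⟩
        | [b], hse =>
          have : b = e := hse b (by simp)
          subst this
          exact ⟨[], t' ++ v, by simp [huv, hst]⟩
        | [b, c], hse =>
          have hb : b = e := hse b (by simp)
          have hc : c = e := hse c (by simp)
          subst hb; subst hc
          exact ⟨[], t' ++ v, by simp [huv, hst]⟩
        | b :: c :: d :: s', hse =>
          have hb : b = e := hse b (by simp)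
          have hc : c = e := hse c (by simp)
          have hd : d = e := hse d (by simp)
          subst hb; subst hc; subst hd
          exact ⟨[x], s' ++ y :: t' ++ v, Or.inl (by simp [huv, hst])⟩
      · refine ⟨[], x :: u ++ v, by simp [huv], by simp, ?_⟩
        intro b hb
        rcases List.mem_cons.1 hb with h | h
        · exact Or.inr h
        rcases List.mem_append.1 h with h | h
        · rcases hu b h with h' | h'
          · exact Or.inl h'
          · exact absurd (h' ▸ h) hy
        · exact hv b h

open Alpha in
lemma no_x_before_y {u v p r : List Alpha} (hu : ∀ a ∈ u, a = e ∨ a = y)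
    (hv : ∀ a ∈ v, a = e ∨ a = x) (h : u ++ v = p ++ x :: r) (hy : y ∈ r) : False := by
  rcases List.append_eq_append_iff.1 h with ⟨a, hp, hva⟩ | ⟨c, huc, hcv⟩
  · have : y ∈ v := by
      rw [hva]; exact List.mem_append_right _ (List.mem_cons_of_mem _ hy)
    rcases hv y this with h' | h' <;> simp at h'
  · match c, hcv with
    | [], hcv =>
      have : y ∈ v := by simp at hcv; rw [← hcv]; exact List.mem_cons_of_mem _ hy
      rcases hv y this with h' | h' <;> simp at h'
    | b :: c', hcv =>
      have hb : b = x := (List.cons_eq_cons.mp hcv).1.symm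
      have : x ∈ u := by rw [huc, hb]; exact List.mem_append_right _ List.mem_cons_self
      rcases hu x this with h' | h' <;> simp at h'

/-- A word is irreducible iff it lies in `{e,y}*{e,x}* − A*e³A*`. -/
theorem stmt_7 (w : FreeMonoid Alpha) :
    (¬ ∃ w' : FreeMonoid Alpha, Step w w') ↔
    ((∃ u v : List Alpha, w.toList = u ++ v ∧
        (∀ a ∈ u, a = Alpha.e ∨ a = Alpha.y) ∧
        (∀ a ∈ v, a = Alpha.e ∨ a = Alpha.x)) ∧
      ¬ ∃ p q : FreeMonoid Alpha,
        w = p * (.of .e * .of .e * .of .e) * q) := by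
  rw [step_iff_bad]
  constructor
  · intro hb
    refine ⟨split_of_not_bad _ hb, ?_⟩
    rintro ⟨p, q, hpq⟩
    exact hb ⟨p.toList, q.toList, Or.inl (by
      simpa [FreeMonoid.toList_mul, FreeMonoid.toList_of] using congrArg FreeMonoid.toList hpq)⟩
  · rintro ⟨⟨u, v, huv, hu, hv⟩, he⟩ ⟨p, q, hb | hb | hb | hb⟩
    · exact he ⟨FreeMonoid.ofList p, FreeMonoid.ofList q,
        by simpa [mul_assoc, FreeMonoid.ofList_append, FreeMonoid.ofList_cons,
          FreeMonoid.ofList_singleton, FreeMonoid.ofList_toList] using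
          congrArg FreeMonoid.ofList hb⟩
    · exact no_x_before_y hu hv (huv.symm.trans (by simpa using hb)) (by simp)
    · exact no_x_before_y hu hv (huv.symm.trans (by simpa using hb)) (by simp)
    · exact no_x_before_y hu hv (huv.symm.trans (by simpa using hb)) (by simp)
end

section
/- Let w be a word over A = {x, y, e} that is irreducible with respect to the rewriting system e³ → e, xey → y, xe²y → x, xy → 1. Then the image of w in the monoid M presented by ⟨x, y, e | e³ = e, xey = y, xe²y = x, xy = 1⟩ is left-invertible if and only if w is either the empty word or a word of the form u·y with u ∈ {e, y}* and w contains no factor e³. -/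
namespace S9
open Alpha FreeMonoid

/-! ### The insertion function and normal forms -/

def cons' : Alpha → List Alpha → List Alpha
  | .y, s => .y :: s
  | .e, .e :: .e :: t => .e :: t
  | .e, s => .e :: s
  | .x, .y :: t => t
  | .x, .e :: .y :: t => .y :: t
  | .x, .e :: .e :: .y :: t => cons' .x t
  | .x, s => .x :: s

lemma cons'_y (s : List Alpha) : cons' .y s = .y :: s := by
  rcases s with _|⟨_|_|_,_|⟨_|_|_,t⟩⟩ <;> rfl

lemma cons'_xy (s : List Alpha) : cons' .x (.y :: s) = s := rfl
lemma cons'_xey (s : List Alpha) : cons' .x (.e :: .y :: s) = .y :: s := rfl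
lemma cons'_xeey (s : List Alpha) : cons' .x (.e :: .e :: .y :: s) = cons' .x s := rfl
lemma cons'_e_y (s : List Alpha) : cons' .e (.y :: s) = .e :: .y :: s := rfl
lemma cons'_e_ey (s : List Alpha) : cons' .e (.e :: .y :: s) = .e :: .e :: .y :: s := rfl
lemma cons'_e_eet (t : List Alpha) : cons' .e (.e :: .e :: t) = .e :: t := rfl
lemma cons'_e_nil : cons' .e [] = [.e] := rfl
lemma cons'_e_x (s : List Alpha) : cons' .e (.x :: s) = .e :: .x :: s := rfl
lemma cons'_e_ex (s : List Alpha) : cons' .e (.e :: .x :: s) = .e :: .e :: .x :: s := rfl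
lemma cons'_e_e_nil : cons' .e [.e] = [.e, .e] := rfl
lemma cons'_x_nil : cons' .x [] = [.x] := rfl
lemma cons'_x_x (s : List Alpha) : cons' .x (.x :: s) = .x :: .x :: s := rfl
lemma cons'_x_e_nil : cons' .x [.e] = [.x, .e] := rfl
lemma cons'_x_ex (s : List Alpha) : cons' .x (.e :: .x :: s) = .x :: .e :: .x :: s := rfl
lemma cons'_x_ee_nil : cons' .x [.e, .e] = [.x, .e, .e] := rfl
lemma cons'_x_eex (s : List Alpha) :
    cons' .x (.e :: .e :: .x :: s) = .x :: .e :: .e :: .x :: s := rfl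
lemma cons'_x_eee (s : List Alpha) :
    cons' .x (.e :: .e :: .e :: s) = .x :: .e :: .e :: .e :: s := rfl

lemma cons'_e_default (s : List Alpha) (h : ∀ t, s ≠ .e :: .e :: t) :
    cons' .e s = .e :: s := by
  rcases s with _|⟨a,_|⟨b,t⟩⟩
  · rfl
  · cases a <;> rfl
  · cases a <;> cases b <;> first | rfl | exact ((h t rfl).elim)

lemma cons'_x_default (s : List Alpha) (h1 : ∀ t, s ≠ .y :: t)
    (h2 : ∀ t, s ≠ .e :: .y :: t) (h3 : ∀ t, s ≠ .e :: .e :: .y :: t) :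
    cons' .x s = .x :: s := by
  rcases s with _|⟨a,_|⟨b,_|⟨c,t⟩⟩⟩
  · rfl
  · cases a <;> first | rfl | exact ((h1 _ rfl).elim)
  · cases a <;> cases b <;>
      first | rfl | exact ((h1 _ rfl).elim) | exact ((h2 _ rfl).elim)
  · cases a <;> cases b <;> cases c <;>
      first
        | rfl
        | exact ((h1 _ rfl).elim)
        | exact ((h2 _ rfl).elim)
        | exact ((h3 _ rfl).elim)

def nfA (a s : List Alpha) : List Alpha := a.foldr cons' s

def nf (a : List Alpha) : List Alpha := nfA a []

lemma nfA_nil (s : List Alpha) : nfA [] s = s := rfl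
lemma nfA_cons (a : Alpha) (t s : List Alpha) : nfA (a :: t) s = cons' a (nfA t s) := rfl
lemma nfA_append (a b s : List Alpha) : nfA (a ++ b) s = nfA a (nfA b s) :=
  List.foldr_append ..

/-! ### Normality -/

def badHead (s : List Alpha) : Prop :=
  (∃ t, s = .e :: .e :: .e :: t) ∨ (∃ t, s = .x :: .y :: t) ∨
  (∃ t, s = .x :: .e :: .y :: t) ∨ (∃ t, s = .x :: .e :: .e :: .y :: t)

def norm : List Alpha → Prop
  | [] => True
  | a :: t => ¬ badHead (a :: t) ∧ norm t

lemma norm_nil : norm [] := trivial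

lemma norm_cons {a : Alpha} {t : List Alpha} :
    norm (a :: t) ↔ ¬ badHead (a :: t) ∧ norm t := Iff.rfl

lemma not_badHead_of_norm {s : List Alpha} (hs : norm s) : ¬ badHead s := by
  cases s with
  | nil => rintro (⟨t,h⟩|⟨t,h⟩|⟨t,h⟩|⟨t,h⟩) <;> simp_all
  | cons a t => exact (norm_cons.1 hs).1

lemma c_eee (s : List Alpha) (hs : ¬ badHead s) :
    cons' .e (cons' .e (cons' .e s)) = cons' .e s := by
  rcases s with _|⟨a,_|⟨b,t⟩⟩
  · rfl
  · cases a <;> rfl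
  · cases a <;> cases b <;> first
      | rfl
      | (rcases t with _|⟨c,t'⟩
         · rfl
         · cases c <;> first
            | rfl
            | exact absurd (Or.inl ⟨t', rfl⟩) hs)

lemma norm_cons' (a : Alpha) (s : List Alpha) (hs : norm s) : norm (cons' a s) := by
  induction a, s using cons'.induct with
  | case1 s =>
    rw [cons'_y]
    refine norm_cons.2 ⟨?_, hs⟩
    rintro (⟨t,h⟩|⟨t,h⟩|⟨t,h⟩|⟨t,h⟩) <;> simp_all
  | case2 t =>
    rw [cons'_e_eet]
    exact (norm_cons.1 hs).2
  | case3 s h1 =>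
    rw [cons'_e_default s (fun t ht => h1 t ht)]
    refine norm_cons.2 ⟨?_, hs⟩
    rintro (⟨t,h⟩|⟨t,h⟩|⟨t,h⟩|⟨t,h⟩) <;> simp_all
  | case4 t =>
    rw [cons'_xy]
    exact (norm_cons.1 hs).2
  | case5 t =>
    rw [cons'_xey]
    exact (norm_cons.1 hs).2
  | case6 t ih =>
    rw [cons'_xeey]
    exact ih (norm_cons.1 (norm_cons.1 (norm_cons.1 hs).2).2).2
  | case7 s h1 h2 h3 =>
    rw [cons'_x_default s (fun t ht => h1 t ht) (fun t ht => h2 t ht)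
      (fun t ht => h3 t ht)]
    refine norm_cons.2 ⟨?_, hs⟩
    rintro (⟨t,h⟩|⟨t,h⟩|⟨t,h⟩|⟨t,h⟩)
    · simp at h
    · exact h1 t (by simp_all)
    · exact h2 t (by simp_all)
    · exact h3 t (by simp_all)

lemma norm_nfA (a s : List Alpha) (hs : norm s) : norm (nfA a s) := by
  induction a with
  | nil => exact hs
  | cons b t ih => exact norm_cons' _ _ ih

lemma norm_nf (a : List Alpha) : norm (nf a) := norm_nfA a [] norm_nil

/-! ### The key commutation lemma -/

lemma nfA_cons'_comm : ∀ (n : ℕ) (u : List Alpha), u.length ≤ n →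
    ∀ (h : Alpha) (s : List Alpha), norm s →
      nfA (cons' h u) s = cons' h (nfA u s) := by
  intro n
  induction n with
  | zero =>
    intro u hu h s hs
    rw [Nat.le_zero, List.length_eq_zero_iff] at hu
    subst hu
    cases h <;> rfl
  | succ n ih =>
    intro u hu h s hs
    cases h with
    | y => rw [cons'_y]; rfl
    | e =>
      rcases u with _|⟨b,_|⟨c,t⟩⟩
      · rfl
      · cases b <;> rfl
      · cases b <;> cases c <;> try rfl
        -- remaining: b = e, c = e
        rw [cons'_e_eet]
        show cons' .e (nfA t s) = cons' .e (cons' .e (cons' .e (nfA t s)))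
        exact (c_eee _ (not_badHead_of_norm (norm_nfA t s hs))).symm
    | x =>
      rcases u with _|⟨b,_|⟨c,_|⟨d,t⟩⟩⟩
      · rfl
      · cases b <;>
          simp only [nfA_cons, nfA_nil, cons'_y, cons'_xy, cons'_x_nil, cons'_x_x,
            cons'_x_e_nil, cons'_e_nil, cons'_e_x, cons'_e_y, cons'_e_e_nil]
      · cases b <;> cases c <;>
          simp only [nfA_cons, nfA_nil, cons'_y, cons'_xy, cons'_xey, cons'_x_nil,
            cons'_x_x, cons'_x_e_nil, cons'_x_ex, cons'_x_ee_nil, cons'_e_nil,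
            cons'_e_x, cons'_e_y, cons'_e_ex, cons'_e_ey, cons'_e_e_nil, cons'_e_eet]
      · cases b <;> cases c <;> cases d <;>
          simp only [nfA_cons, nfA_nil, cons'_y, cons'_xy, cons'_xey, cons'_xeey,
            cons'_x_x, cons'_x_ex, cons'_x_eex, cons'_x_eee, cons'_e_x, cons'_e_y,
            cons'_e_ex, cons'_e_ey, cons'_e_eet] <;>
          first
            | rfl
            | exact ih t (by simp at hu; omega) .x s hs

lemma nfA_eq_nf (a s : List Alpha) (hs : norm s) : nfA a s = nfA (nf a) s := by
  induction a with
  | nil => rfl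
  | cons b t iht =>
    show cons' b (nfA t s) = nfA (cons' b (nf t)) s
    rw [nfA_cons'_comm (nf t).length (nf t) le_rfl b s hs, ← iht]

lemma nfA_cons'' (h : Alpha) (u s : List Alpha) (hs : norm s) :
    nfA (cons' h u) s = cons' h (nfA u s) :=
  nfA_cons'_comm u.length u le_rfl h s hs

/-! ### Invariance of `nf` under the congruence -/

lemma congr_nf {a b : FreeMonoid Alpha} (h : ConGen.Rel rel a b) :
    nf (FreeMonoid.toList a) = nf (FreeMonoid.toList b) := by
  induction h with
  | of u v huv =>
    rcases huv with ⟨h1,h2⟩|⟨h1,h2⟩|⟨h1,h2⟩|⟨h1,h2⟩ <;> subst h1 <;> subst h2 <;> rfl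
  | refl _ => rfl
  | symm _ ih => exact ih.symm
  | trans _ _ ih1 ih2 => exact ih1.trans ih2
  | mul _ _ ih1 ih2 =>
    rename_i w₁ w₂ w₃ w₄ _ _
    show nf (toList (w₁ * w₃)) = nf (toList (w₂ * w₄))
    rw [toList_mul, toList_mul]
    show nfA (toList w₁ ++ toList w₃) [] = nfA (toList w₂ ++ toList w₄) []
    rw [nfA_append, nfA_append]
    show nfA (toList w₁) (nf (toList w₃)) = nfA (toList w₂) (nf (toList w₄))
    rw [nfA_eq_nf (toList w₁) _ (norm_nf _), nfA_eq_nf (toList w₂) _ (norm_nf _),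
      ih1, ih2]

/-! ### list-level `mk` -/

abbrev mmk (l : List Alpha) : M := PresentedMonoid.mk rel (FreeMonoid.ofList l)

lemma mmk_append (a b : List Alpha) : mmk (a ++ b) = mmk a * mmk b := by
  show PresentedMonoid.mk rel (ofList (a ++ b)) = _
  rw [ofList_append, map_mul]

lemma mmk_xy : mmk [.x, .y] = 1 :=
  Quotient.sound (ConGen.Rel.of _ _ (Or.inr (Or.inr (Or.inr ⟨rfl, rfl⟩))))

lemma mmk_xey : mmk [.x, .e, .y] = mmk [.y] :=
  Quotient.sound (ConGen.Rel.of _ _ (Or.inr (Or.inl ⟨rfl, rfl⟩)))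

lemma mmk_eee : mmk [.e, .e, .e] = mmk [.e] :=
  Quotient.sound (ConGen.Rel.of _ _ (Or.inl ⟨rfl, rfl⟩))

lemma X_eq : X = mmk [.x] := rfl
lemma E_eq : E = mmk [.e] := rfl

lemma X_mul_y (t : List Alpha) : X * mmk (.y :: t) = mmk t := by
  rw [X_eq, ← mmk_append]
  show mmk ([Alpha.x, Alpha.y] ++ t) = mmk t
  rw [mmk_append, mmk_xy, one_mul]

lemma X_mul_ey (t : List Alpha) : X * mmk (.e :: .y :: t) = mmk (.y :: t) := by
  rw [X_eq, ← mmk_append]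
  show mmk ([Alpha.x, Alpha.e, Alpha.y] ++ t) = mmk (.y :: t)
  rw [mmk_append, mmk_xey, ← mmk_append]
  rfl

lemma XE_mul_eey (t : List Alpha) :
    (X * E) * mmk (.e :: .e :: .y :: t) = mmk (.y :: t) := by
  rw [X_eq, E_eq, ← mmk_append, ← mmk_append]
  show mmk ([Alpha.x] ++ [Alpha.e, Alpha.e, Alpha.e] ++ (Alpha.y :: t)) = mmk (.y :: t)
  rw [mmk_append, mmk_append, mmk_eee, ← mmk_append, ← mmk_append]
  show mmk ([Alpha.x, Alpha.e, Alpha.y] ++ t) = mmk (.y :: t)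
  rw [mmk_append, mmk_xey, ← mmk_append]
  rfl

/-! ### Backward direction: construction of left inverses -/

lemma left_invertible : ∀ (n : ℕ) (wl : List Alpha), wl.length ≤ n →
    (∀ a ∈ wl, a = Alpha.e ∨ a = Alpha.y) → norm wl → wl.getLast? = some .y →
    ∃ p' : M, p' * mmk wl = 1 := by
  intro n
  induction n with
  | zero =>
    intro wl hl _ _ hy
    rw [Nat.le_zero, List.length_eq_zero_iff] at hl
    subst hl; simp at hy
  | succ n ih =>
    intro wl hl hab hnorm hy
    rcases wl with _|⟨a,t⟩
    · simp at hy
    rcases hab a List.mem_cons_self with ha | ha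
    · -- a = e
      subst ha
      rcases t with _|⟨b,t'⟩
      · simp at hy
      rcases hab b (by simp) with hb | hb
      · -- b = e
        subst hb
        rcases t' with _|⟨c,t''⟩
        · simp at hy
        rcases hab c (by simp) with hc | hc
        · subst hc
          exact absurd (Or.inl ⟨t'', rfl⟩) (not_badHead_of_norm hnorm)
        · subst hc
          have hyt : (Alpha.y :: t'').getLast? = some .y := by
            rwa [List.getLast?_cons_cons, List.getLast?_cons_cons] at hy
          obtain ⟨q, hq⟩ := ih (Alpha.y :: t'') (by simp at hl ⊢; omega)
            (fun a ha => hab a (by simp only [List.mem_cons] at ha ⊢; tauto))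
            (norm_cons.1 (norm_cons.1 hnorm).2).2 hyt
          exact ⟨q * (X * E), by rw [mul_assoc, XE_mul_eey, hq]⟩
      · subst hb
        have hyt : (Alpha.y :: t').getLast? = some .y := by
          rwa [List.getLast?_cons_cons] at hy
        obtain ⟨q, hq⟩ := ih (Alpha.y :: t') (by simp at hl ⊢; omega)
          (fun a ha => hab a (by simp only [List.mem_cons] at ha ⊢; tauto))
          (norm_cons.1 hnorm).2 hyt
        exact ⟨q * X, by rw [mul_assoc, X_mul_ey, hq]⟩
    · -- a = y
      subst ha
      rcases t with _|⟨b,t'⟩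
      · exact ⟨X, by rw [X_mul_y]; rfl⟩
      · have hyt : (b :: t').getLast? = some .y := by
          rwa [List.getLast?_cons_cons] at hy
        obtain ⟨q, hq⟩ := ih (b :: t') (by simp at hl ⊢; omega)
          (fun a ha => hab a (by simp only [List.mem_cons] at ha ⊢; tauto))
          (norm_cons.1 hnorm).2 hyt
        exact ⟨q * X, by rw [mul_assoc, X_mul_y, hq]⟩

/-! ### Forward direction lemmas -/

lemma getLast?_cons' (a : Alpha) (s : List Alpha)
    (hs : s.getLast? = some .x ∨ s.getLast? = some .e) :
    (cons' a s).getLast? = s.getLast? := by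
  induction a, s using cons'.induct with
  | case1 s =>
    rw [cons'_y]
    rcases s with _|⟨b,t⟩
    · simp at hs
    · exact List.getLast?_cons_cons
  | case2 t =>
    rw [cons'_e_eet]
    rcases t with _|⟨c,t⟩
    · rfl
    · simp [List.getLast?_cons_cons]
  | case3 s h1 =>
    rw [cons'_e_default s (fun t ht => h1 t ht)]
    rcases s with _|⟨b,t⟩
    · simp at hs
    · exact List.getLast?_cons_cons
  | case4 t =>
    rw [cons'_xy]
    rcases t with _|⟨c,t⟩
    · simp at hs
    · exact List.getLast?_cons_cons.symm
  | case5 t =>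
    rw [cons'_xey]
    rcases t with _|⟨c,t⟩
    · simp at hs
    · simp [List.getLast?_cons_cons]
  | case6 t ih =>
    rw [cons'_xeey]
    rcases t with _|⟨c,t₀⟩
    · simp at hs
    · have heq : (Alpha.e :: Alpha.e :: Alpha.y :: c :: t₀).getLast? = (c :: t₀).getLast? := by
        simp [List.getLast?_cons_cons]
      rw [heq] at hs ⊢
      exact ih hs
  | case7 s h1 h2 h3 =>
    rw [cons'_x_default s (fun t ht => h1 t ht) (fun t ht => h2 t ht) (fun t ht => h3 t ht)]
    rcases s with _|⟨b,t⟩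
    · simp at hs
    · exact List.getLast?_cons_cons

lemma getLast?_nfA (v s : List Alpha)
    (hs : s.getLast? = some .x ∨ s.getLast? = some .e) :
    (nfA v s).getLast? = s.getLast? := by
  induction v with
  | nil => rfl
  | cons b v' ih =>
    show (cons' b (nfA v' s)).getLast? = s.getLast?
    rw [getLast?_cons' b (nfA v' s) (by rw [ih]; exact hs), ih]

lemma nf_of_norm : ∀ l : List Alpha, norm l → nf l = l := by
  intro l
  induction l with
  | nil => exact fun _ => rfl
  | cons a t ih =>
    intro h
    have hbad := (norm_cons.1 h).1
    show cons' a (nf t) = a :: t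
    rw [ih (norm_cons.1 h).2]
    cases a with
    | y => exact cons'_y t
    | e =>
      refine cons'_e_default t (fun t₀ ht₀ => hbad ?_)
      subst ht₀; exact Or.inl ⟨t₀, rfl⟩
    | x =>
      refine cons'_x_default t (fun t₀ ht₀ => hbad ?_) (fun t₀ ht₀ => hbad ?_)
          (fun t₀ ht₀ => hbad ?_) <;> subst ht₀
      · exact Or.inr (Or.inl ⟨t₀, rfl⟩)
      · exact Or.inr (Or.inr (Or.inl ⟨t₀, rfl⟩))
      · exact Or.inr (Or.inr (Or.inr ⟨t₀, rfl⟩))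

lemma norm_of_noStep : ∀ l : List Alpha, (¬ ∃ w', Step (FreeMonoid.ofList l) w') → norm l := by
  intro l
  induction l with
  | nil => exact fun _ => norm_nil
  | cons a t ih =>
    intro h
    refine norm_cons.2 ⟨?_, ih ?_⟩
    · rintro (⟨t₀,ht⟩|⟨t₀,ht⟩|⟨t₀,ht⟩|⟨t₀,ht⟩)
      · exact h ⟨_, 1, ofList t₀, _, _, Or.inl ⟨rfl, rfl⟩, by rw [ht]; rfl, rfl⟩
      · exact h ⟨_, 1, ofList t₀, _, _, Or.inr (Or.inr (Or.inr ⟨rfl, rfl⟩)),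
          by rw [ht]; rfl, rfl⟩
      · exact h ⟨_, 1, ofList t₀, _, _, Or.inr (Or.inl ⟨rfl, rfl⟩), by rw [ht]; rfl, rfl⟩
      · exact h ⟨_, 1, ofList t₀, _, _, Or.inr (Or.inr (Or.inl ⟨rfl, rfl⟩)),
          by rw [ht]; rfl, rfl⟩
    · rintro ⟨w', u, v, l0, r0, hr, he, rfl⟩
      refine h ⟨FreeMonoid.of a * (u * r0 * v), FreeMonoid.of a * u, v, l0, r0, hr, ?_, ?_⟩
      · rw [show (ofList (a :: t) : FreeMonoid Alpha) = FreeMonoid.of a * ofList t from rfl,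
          he]
        simp [mul_assoc]
      · simp [mul_assoc]

lemma mem_ey : ∀ l : List Alpha, norm l → l.getLast? = some .y →
    ∀ a ∈ l, a = Alpha.e ∨ a = Alpha.y := by
  intro l
  induction l with
  | nil => simp
  | cons a t ih =>
    intro hn hy b hb
    rcases t with _|⟨c,t'⟩
    · simp at hy hb
      subst hy; subst hb; right; rfl
    · have hy' : (c :: t').getLast? = some .y := by
        rwa [List.getLast?_cons_cons] at hy
      have htail := ih (norm_cons.1 hn).2 hy'
      rcases List.mem_cons.1 hb with rfl | hb'
      · cases b with
        | e => left; rfl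
        | y => right; rfl
        | x =>
          exfalso
          have hbad := (norm_cons.1 hn).1
          rcases htail c (by simp) with rfl | rfl
          · -- c = e
            rcases t' with _|⟨d,t''⟩
            · simp at hy'
            rcases htail d (by simp) with rfl | rfl
            · -- d = e
              rcases t'' with _|⟨f,t₃⟩
              · simp at hy'
              rcases htail f (by simp) with rfl | rfl
              · -- f = e : eee inside the tail
                exact not_badHead_of_norm (norm_cons.1 hn).2 (Or.inl ⟨t₃, rfl⟩)
              · exact hbad (Or.inr (Or.inr (Or.inr ⟨t₃, rfl⟩)))
            · exact hbad (Or.inr (Or.inr (Or.inl ⟨t'', rfl⟩)))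
          · exact hbad (Or.inr (Or.inl ⟨t', rfl⟩))
      · exact htail b hb'

end S9

/-- For irreducible `w`, the image of `w` in `M` is left-invertible iff `w` is
empty or of the form `u·y` with `u ∈ {e,y}*` and `w` has no factor `e³`. -/
theorem stmt_9 (w : FreeMonoid Alpha) (hw : ¬ ∃ w' : FreeMonoid Alpha, Step w w') :
    (∃ p' : M, p' * PresentedMonoid.mk rel w = 1) ↔
    (w = 1 ∨
      ((∃ u : FreeMonoid Alpha, (∀ a ∈ u.toList, a = Alpha.e ∨ a = Alpha.y) ∧
          w = u * .of .y) ∧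
        ¬ ∃ p q : FreeMonoid Alpha,
          w = p * (.of .e * .of .e * .of .e) * q)) := by
  constructor
  · rintro ⟨p', hp⟩
    obtain ⟨v, rfl⟩ := PresentedMonoid.surjective_mk p'
    have hmm : PresentedMonoid.mk rel (v * w) = PresentedMonoid.mk rel 1 := by
      rw [map_mul, map_one]; exact hp
    have hnf : S9.nf (FreeMonoid.toList (v * w)) = S9.nf (FreeMonoid.toList 1) :=
      S9.congr_nf (Quotient.exact hmm)
    have hnorm : S9.norm (FreeMonoid.toList w) :=
      S9.norm_of_noStep (FreeMonoid.toList w) (by simpa using hw)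
    have hnf2 : S9.nfA (FreeMonoid.toList v) (FreeMonoid.toList w) = [] := by
      rw [FreeMonoid.toList_mul] at hnf
      rw [show S9.nf (FreeMonoid.toList v ++ FreeMonoid.toList w)
          = S9.nfA (FreeMonoid.toList v) (S9.nf (FreeMonoid.toList w)) from
          S9.nfA_append _ _ [], S9.nf_of_norm _ hnorm] at hnf
      exact hnf
    by_cases hempty : FreeMonoid.toList w = []
    · left
      have : w = FreeMonoid.ofList [] := by
        rw [← FreeMonoid.ofList_toList w, hempty]
      simpa using this
    · right
      have hlast : (FreeMonoid.toList w).getLast? = some .y := by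
        rcases hl : (FreeMonoid.toList w).getLast? with _ | a
        · exact absurd (by simpa using hl) hempty
        · have ha : a = Alpha.y := by
            by_contra hne
            have hor : (FreeMonoid.toList w).getLast? = some .x ∨
                (FreeMonoid.toList w).getLast? = some .e := by
              cases a
              · left; exact hl
              · exact absurd rfl hne
              · right; exact hl
            have hlw := S9.getLast?_nfA (FreeMonoid.toList v) (FreeMonoid.toList w) hor
            rw [hnf2, hl] at hlw
            simp at hlw
          rw [ha]
      constructor
      · obtain ⟨u', hu'⟩ : ∃ u', FreeMonoid.toList w = u' ++ [Alpha.y] :=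
          ⟨(FreeMonoid.toList w).dropLast,
            (List.dropLast_append_getLast? Alpha.y (by simpa using hlast)).symm⟩
        refine ⟨FreeMonoid.ofList u', ?_, ?_⟩
        · intro a ha
          have hmem : a ∈ FreeMonoid.toList w := by
            rw [hu']; exact List.mem_append_left _ (by simpa using ha)
          exact S9.mem_ey (FreeMonoid.toList w) hnorm hlast a hmem
        · have : w = FreeMonoid.ofList (u' ++ [Alpha.y]) := by
            rw [← FreeMonoid.ofList_toList w, hu']
          rw [this, FreeMonoid.ofList_append, FreeMonoid.ofList_singleton]
      · rintro ⟨p, q, hpq⟩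
        exact hw ⟨p * FreeMonoid.of .e * q, p, q, _, _, Or.inl ⟨rfl, rfl⟩, hpq, rfl⟩
  · rintro (rfl | ⟨⟨u, hu, rfl⟩, -⟩)
    · exact ⟨1, by rw [map_one, one_mul]⟩
    · have hnorm : S9.norm (FreeMonoid.toList (u * FreeMonoid.of .y)) :=
      S9.norm_of_noStep _ (by simpa using hw)
      have htl : FreeMonoid.toList (u * FreeMonoid.of .y)
          = FreeMonoid.toList u ++ [Alpha.y] := rfl
      obtain ⟨p', hp⟩ := S9.left_invertible (FreeMonoid.toList u ++ [Alpha.y]).length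
        (FreeMonoid.toList u ++ [Alpha.y]) le_rfl
        (by
          intro a ha
          rcases List.mem_append.1 ha with h | h
          · exact hu a h
          · right; simpa using h)
        (htl ▸ hnorm)
        List.getLast?_concat
      refine ⟨p', ?_⟩
      have : S9.mmk (FreeMonoid.toList u ++ [Alpha.y])
          = PresentedMonoid.mk rel (u * FreeMonoid.of .y) := by
        show PresentedMonoid.mk rel (FreeMonoid.ofList (FreeMonoid.toList u ++ [Alpha.y])) = _
        rw [FreeMonoid.ofList_append, FreeMonoid.ofList_singleton, FreeMonoid.ofList_toList]
      rw [← this]; exact hp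
end
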